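/- arXiv:0904.2306 — 7 statements merged into one kernel-verified Lean document; each statement's English description precedes it below -/
import Mathlib

section
/- Let k be a positive integer and let G(V,E) be a finite simple directed graph in which every vertex has positive indegree. If V = V_1 ∪ ... ∪ V_{k+1} is a partition of V into pairwise disjoint sets with η(G,V_1,...,V_{k+1}) < (k+1)·|V|, then there exists a partition V = V'_1 ∪ ... ∪ V'_{k+1} into pairwise disjoint sets with η(G,V'_1,...,V'_{k+1}) > η(G,V_1,...,V_{k+1}). -/
/-- The set of in-neighbors of `v` in the directed graph with adjacency
relation `A` (`A u v` means there is an edge from `u` to `v`). -/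
def inNbr {V : Type*} (A : V → V → Prop) (v : V) : Set V := {u | A u v}

/-- `dClosure A ok S` is the least superset of `S` closed under the coloring
rule: a vertex `v` gets colored white as soon as the number `n` of its white
in-neighbors satisfies the threshold condition `ok v n`. -/
def dClosure {V : Type*} (A : V → V → Prop) (ok : V → ℕ → Prop) (S : Set V) : Set V :=
  ⋂₀ {T : Set V | S ⊆ T ∧ ∀ v, ok v ((inNbr A v ∩ T).ncard) → v ∈ T}

/-- The threshold rule `φ_{k/(k+1)}`: `v` is colored white when at least
`(k/(k+1)) · deg^in(v)` of its in-neighbors are white,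
i.e. `k · deg^in(v) ≤ (k+1) · n`. -/
def fracOk {V : Type*} (A : V → V → Prop) (k : ℕ) (v : V) (n : ℕ) : Prop :=
  k * (inNbr A v).ncard ≤ (k + 1) * n

section helpers
variable {V : Type*} (A : V → V → Prop) (ok : V → ℕ → Prop)

lemma subset_dClosure (S : Set V) : S ⊆ dClosure A ok S :=
  fun _ hx => Set.mem_sInter.2 fun _ hT => hT.1 hx

lemma dClosure_mono {S S' : Set V} (h : S ⊆ S') : dClosure A ok S ⊆ dClosure A ok S' :=
  fun x hx => Set.mem_sInter.2 fun T hT => Set.mem_sInter.1 hx T ⟨h.trans hT.1, hT.2⟩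

lemma dClosure_min {S T : Set V} (h1 : S ⊆ T)
    (h2 : ∀ v, ok v ((inNbr A v ∩ T).ncard) → v ∈ T) : dClosure A ok S ⊆ T :=
  Set.sInter_subset_of_mem ⟨h1, h2⟩

lemma dClosure_closed [Fintype V] (k : ℕ) (S : Set V) (v : V)
    (h : fracOk A k v ((inNbr A v ∩ dClosure A (fracOk A k) S).ncard)) :
    v ∈ dClosure A (fracOk A k) S := by
  refine Set.mem_sInter.2 fun T hT => hT.2 v ?_
  refine le_trans h ?_
  exact Nat.mul_le_mul_left _ (Set.ncard_le_ncard
    (Set.inter_subset_inter_right _ (Set.sInter_subset_of_mem hT)) (Set.toFinite _))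

/-- if `v` is in the closure of `S \ {v}`, then that closure equals the closure of `S`. -/
lemma dClosure_diff_singleton [Fintype V] (k : ℕ) (S : Set V) (v : V)
    (h : v ∈ dClosure A (fracOk A k) (S \ {v})) :
    dClosure A (fracOk A k) S = dClosure A (fracOk A k) (S \ {v}) := by
  refine le_antisymm ?_ (dClosure_mono A _ Set.diff_subset)
  refine dClosure_min A _ ?_ (fun w hw => dClosure_closed A k _ w hw)
  intro x hx
  by_cases hxv : x = v
  · exact hxv ▸ h
  · exact subset_dClosure A _ _ ⟨hx, hxv⟩

lemma sum_ncard_le [Fintype V] {ι : Type*} (s : Finset ι) (B : ι → Set V) (N : Set V)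
    (hsub : ∀ j ∈ s, B j ⊆ N)
    (hdisj : ∀ j ∈ s, ∀ l ∈ s, j ≠ l → Disjoint (B j) (B l)) :
    ∑ j ∈ s, (B j).ncard ≤ N.ncard := by
  induction s using Finset.cons_induction generalizing N with
  | empty => simp
  | cons a s ha ih =>
    rw [Finset.sum_cons]
    have h1 : ∀ j ∈ s, B j ⊆ N \ B a := by
      intro j hj x hx
      refine ⟨hsub j (Finset.mem_cons_of_mem hj) hx, fun hxa => ?_⟩
      exact Set.disjoint_left.mp
        (hdisj j (Finset.mem_cons_of_mem hj) a (Finset.mem_cons_self a s)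
          (by rintro rfl; exact ha hj)) hx hxa
    have h2 := ih (N \ B a) h1 (fun j hj l hl => hdisj j (Finset.mem_cons_of_mem hj) l
      (Finset.mem_cons_of_mem hl))
    have h3 : (N \ B a).ncard + (B a).ncard = N.ncard :=
      Set.ncard_diff_add_ncard_of_subset (hsub a (Finset.mem_cons_self a s)) (Set.toFinite _)
    omega

end helpers

/-- Lemma 2: if a partition does not attain the maximal potential
`η = (k+1)·|V|`, then there is a partition of strictly larger potential. -/
theorem stmt1 {V : Type*} [Fintype V] (A : V → V → Prop)
    (hsimple : ∀ v, ¬ A v v) (hindeg : ∀ v : V, ∃ u, A u v)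
    (k : ℕ) (hk : 0 < k)
    (P : Fin (k + 1) → Set V)
    (hdisj : ∀ i j, i ≠ j → Disjoint (P i) (P j))
    (hcover : (⋃ i, P i) = Set.univ)
    (hlt : ∑ i : Fin (k + 1), (dClosure A (fracOk A k) (Set.univ \ P i)).ncard
        < (k + 1) * Fintype.card V) :
    ∃ Q : Fin (k + 1) → Set V,
      (∀ i j, i ≠ j → Disjoint (Q i) (Q j)) ∧ (⋃ i, Q i) = Set.univ ∧
      ∑ i : Fin (k + 1), (dClosure A (fracOk A k) (Set.univ \ P i)).ncard
        < ∑ i : Fin (k + 1), (dClosure A (fracOk A k) (Set.univ \ Q i)).ncard := by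
  classical
  -- Step 1: some closure misses a vertex
  have h1 : ∃ i ∈ Finset.univ (α := Fin (k+1)),
      (dClosure A (fracOk A k) (Set.univ \ P i)).ncard < Fintype.card V := by
    apply Finset.exists_lt_of_sum_lt
    simpa [Finset.sum_const, Finset.card_univ, mul_comm] using hlt
  obtain ⟨i, -, hi⟩ := h1
  have h2 : ∃ v, v ∉ dClosure A (fracOk A k) (Set.univ \ P i) := by
    by_contra h; push_neg at h
    have he : dClosure A (fracOk A k) (Set.univ \ P i) = Set.univ := Set.eq_univ_of_forall h
    rw [he, Set.ncard_univ, Nat.card_eq_fintype_card] at hi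
    omega
  obtain ⟨v, hv⟩ := h2
  have hvP : v ∈ P i := by
    by_contra hvi
    exact hv (subset_dClosure A _ _ ⟨Set.mem_univ v, hvi⟩)
  have hvnot : ∀ l, l ≠ i → v ∉ P l := fun l hl hvl =>
    Set.disjoint_left.mp (hdisj l i hl) hvl hvP
  -- Step 3: find j ≠ i with v in the closure of (univ \ P j) \ {v}
  have h3 : ∃ j, j ≠ i ∧ v ∈ dClosure A (fracOk A k) ((Set.univ \ P j) \ {v}) := by
    by_contra h; push_neg at h
    have hall : ∀ j : Fin (k+1), v ∉ dClosure A (fracOk A k) ((Set.univ \ P j) \ {v}) := by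
      intro j
      by_cases hji : j = i
      · subst hji
        have he : (Set.univ \ P j) \ {v} = Set.univ \ P j :=
          Set.diff_singleton_eq_self (by simp [hvP])
        rw [he]; exact hv
      · exact fun hmem => h j hji hmem
    set d := (inNbr A v).ncard with hd
    set B : Fin (k+1) → Set V :=
      fun j => inNbr A v \ dClosure A (fracOk A k) ((Set.univ \ P j) \ {v}) with hB
    have hBP : ∀ j, B j ⊆ P j := by
      intro j w hw
      have hTw : w ∉ (Set.univ \ P j) \ {v} := fun hT => hw.2 (subset_dClosure A _ _ hT)
      have hwv : w ≠ v := by rintro rfl; exact hsimple _ hw.1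
      simp only [Set.mem_diff, Set.mem_univ, true_and, Set.mem_singleton_iff, not_and,
        not_not] at hTw
      by_contra hwp
      exact hwv (hTw hwp)
    have hBcard : ∀ j, d + 1 ≤ (k+1) * (B j).ncard := by
      intro j
      have hnotok : ¬ fracOk A k v
          ((inNbr A v ∩ dClosure A (fracOk A k) ((Set.univ \ P j) \ {v})).ncard) :=
        fun hok => hall j (dClosure_closed A k _ v hok)
      unfold fracOk at hnotok
      push_neg at hnotok
      set n := (inNbr A v ∩ dClosure A (fracOk A k) ((Set.univ \ P j) \ {v})).ncard with hn
      have hsplit : (B j).ncard + n = d := by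
        have he : B j = inNbr A v \
            (inNbr A v ∩ dClosure A (fracOk A k) ((Set.univ \ P j) \ {v})) := by
          rw [hB]; ext x
          simp only [Set.mem_diff, Set.mem_inter_iff, not_and]
          tauto
        rw [he, hn]
        exact Set.ncard_diff_add_ncard_of_subset Set.inter_subset_left (Set.toFinite _)
      have hkd : k * d = k * (B j).ncard + k * n := by rw [← hsplit]; ring
      have hlt2 : (k+1) * n < k * d := hnotok
      set b := (B j).ncard with hb
      nlinarith [hsplit, hkd, hlt2]
    have hsum : ∑ j : Fin (k+1), (B j).ncard ≤ d := by
      exact sum_ncard_le Finset.univ B (inNbr A v) (fun j _ => Set.diff_subset)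
        (fun j _ l _ hjl => Disjoint.mono (hBP j) (hBP l) (hdisj j l hjl))
    have hfinal : (k+1) * (d+1) ≤ (k+1) * d := by
      calc (k+1) * (d+1) = ∑ _j : Fin (k+1), (d+1) := by
            simp [Finset.sum_const, Finset.card_univ, mul_comm]
        _ ≤ ∑ j : Fin (k+1), (k+1) * (B j).ncard := Finset.sum_le_sum (fun j _ => hBcard j)
        _ = (k+1) * ∑ j : Fin (k+1), (B j).ncard := by rw [Finset.mul_sum]
        _ ≤ (k+1) * d := Nat.mul_le_mul_left _ hsum
    have := Nat.le_of_mul_le_mul_left hfinal (Nat.succ_pos k)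
    omega
  obtain ⟨j, hji, hvj⟩ := h3
  -- Step 4: the improved partition
  set Q : Fin (k+1) → Set V :=
    fun l => if l = i then P i \ {v} else if l = j then P j ∪ {v} else P l with hQ
  have hmem : ∀ (l : Fin (k+1)) (x : V), x ∈ Q l ↔ (if x = v then l = j else x ∈ P l) := by
    intro l x
    by_cases hli : l = i
    · subst hli
      by_cases hxv : x = v
      · subst hxv; simp [hQ, Ne.symm hji]
      · simp [hQ, hxv]
    · by_cases hlj : l = j
      · subst hlj
        by_cases hxv : x = v
        · subst hxv; simp [hQ, hli]
        · simp [hQ, hli, hxv]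
      · by_cases hxv : x = v
        · subst hxv; simp [hQ, hli, hlj, hvnot l hli]
        · simp [hQ, hli, hlj, hxv]
  have hQi : Set.univ \ Q i = (Set.univ \ P i) ∪ {v} := by
    ext x
    by_cases hxv : x = v
    · subst hxv
      simp [hmem, Ne.symm hji]
    · simp [hmem, hxv]
  have hQj : Set.univ \ Q j = (Set.univ \ P j) \ {v} := by
    ext x
    by_cases hxv : x = v
    · subst hxv
      simp [hmem]
    · simp [hmem, hxv]
  have hQl : ∀ l, l ≠ i → l ≠ j → Q l = P l := by
    intro l hli hlj
    simp [hQ, hli, hlj]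
  refine ⟨Q, ?_, ?_, ?_⟩
  · intro l m hlm
    rw [Set.disjoint_left]
    intro x hxl hxm
    rw [hmem] at hxl hxm
    by_cases hxv : x = v
    · rw [if_pos hxv] at hxl hxm; exact hlm (hxl.trans hxm.symm)
    · rw [if_neg hxv] at hxl hxm; exact Set.disjoint_left.mp (hdisj l m hlm) hxl hxm
  · apply Set.eq_univ_of_forall
    intro x
    rw [Set.mem_iUnion]
    by_cases hxv : x = v
    · exact ⟨j, (hmem j x).2 (by rw [if_pos hxv])⟩
    · have hx : x ∈ ⋃ l, P l := hcover ▸ Set.mem_univ x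
      obtain ⟨l, hl⟩ := Set.mem_iUnion.mp hx
      exact ⟨l, (hmem l x).2 (by rw [if_neg hxv]; exact hl)⟩
  · apply Finset.sum_lt_sum
    · intro l _
      by_cases hli : l = i
      · subst hli
        rw [hQi]
        exact Set.ncard_le_ncard (dClosure_mono A _ Set.subset_union_left) (Set.toFinite _)
      · by_cases hlj : l = j
        · subst hlj
          rw [hQj, ← dClosure_diff_singleton A k (Set.univ \ P l) v hvj]
        · rw [hQl l hli hlj]
    · refine ⟨i, Finset.mem_univ i, ?_⟩
      rw [hQi]
      apply Set.ncard_lt_ncard _ (Set.toFinite _)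
      have hsub : dClosure A (fracOk A k) (Set.univ \ P i) ⊆
          dClosure A (fracOk A k) ((Set.univ \ P i) ∪ {v}) :=
        dClosure_mono A _ Set.subset_union_left
      refine (Set.ssubset_iff_of_subset hsub).2 ⟨v, ?_, hv⟩
      exact subset_dClosure A _ _ (Set.mem_union_right _ rfl)
end

section
/- Let G(V,E) be a finite simple undirected connected graph, (S, V\S) a proper cut, G'(V',E') a connected component of G[S], and v ∈ V'. Then B(S\{v}) ⊆ B(S) \ {G'}; that is, every bad connected component of G[S\{v}] with respect to the cut (S\{v}, (V\S)∪{v}) is a bad connected component of G[S] with respect to (S, V\S) other than G'. -/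
/-- The size `e(S, V\S)` of the cut `(S, V\S)`: the number of edges of `G`
with one endpoint in `S` and the other outside `S` (each such edge is counted
once, as the ordered pair whose first coordinate lies in `S`). -/
noncomputable def cutE {V : Type*} (G : SimpleGraph V) (S : Set V) : ℕ :=
  {p : V × V | G.Adj p.1 p.2 ∧ p.1 ∈ S ∧ p.2 ∉ S}.ncard

/-- `v` is bad with respect to the cut `(S, V\S)`:
`|N(v) ∩ S| = |N(v) \ S|`. -/
def badVtx {V : Type*} (G : SimpleGraph V) (S : Set V) (v : V) : Prop :=
  (G.neighborSet v ∩ S).ncard = (G.neighborSet v \ S).ncard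

/-- The cut `(S, V\S)` is proper: no vertex has more neighbors on its own side
than on the other side. -/
def properCut {V : Type*} (G : SimpleGraph V) (S : Set V) : Prop :=
  (∀ v ∈ S, (G.neighborSet v ∩ S).ncard ≤ (G.neighborSet v \ S).ncard) ∧
  (∀ v ∉ S, (G.neighborSet v \ S).ncard ≤ (G.neighborSet v ∩ S).ncard)

/-- The vertex sets of the connected components of the induced subgraph `G[S]`,
viewed as subsets of `V`. -/
def comps {V : Type*} (G : SimpleGraph V) (S : Set V) : Set (Set V) :=
  {C | ∃ c : (G.induce S).ConnectedComponent, C = Subtype.val '' c.supp}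

/-- `badComps G S` is `B(S)`: the set of connected components of `G[S]` all of
whose vertices are bad with respect to the cut `(S, V\S)`. -/
def badComps {V : Type*} (G : SimpleGraph V) (S : Set V) : Set (Set V) :=
  {C | C ∈ comps G S ∧ ∀ v ∈ C, badVtx G S v}

/-- `dSet G v U = d(v, U) = min_{u ∈ U} d(v, u)`. -/
noncomputable def dSet {V : Type*} (G : SimpleGraph V) (v : V) (U : Set V) : ℕ :=
  sInf ((G.dist v) '' U)

/-- The potential `ψ(S, v*) = e(S, V\S)·|V|² −
[Σ_{Ĥ ∈ B(S)} d(v*, V̂) + Σ_{Ĥ ∈ B(V\S)} d(v*, V̂)]`. -/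
noncomputable def psi {V : Type*} [Fintype V] (G : SimpleGraph V) (S : Set V) (vs : V) : ℤ :=
  (cutE G S : ℤ) * (Fintype.card V : ℤ) ^ 2
    - ((∑ᶠ C ∈ badComps G S, (dSet G vs C : ℤ))
      + ∑ᶠ C ∈ badComps G Sᶜ, (dSet G vs C : ℤ))

/-- Lemma: for a proper cut `(S, V\S)`, a connected component `G'(V',E')` of
`G[S]` and `v ∈ V'`, every bad component of `G[S\{v}]` (w.r.t. the cut
`(S\{v}, (V\S)∪{v})`) is a bad component of `G[S]` (w.r.t. `(S, V\S)`)
other than `G'`. -/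
theorem stmt9 {V : Type*} [Fintype V] (G : SimpleGraph V) (hconn : G.Connected)
    (S : Set V) (hproper : properCut G S)
    (V' : Set V) (hV' : V' ∈ comps G S) (v : V) (hv : v ∈ V') :
    badComps G (S \ {v}) ⊆ badComps G S \ {V'} := by
  classical
  obtain ⟨c', hc'⟩ := hV'
  have hvS : v ∈ S := by
    rw [hc'] at hv; obtain ⟨⟨x, hx⟩, _, rfl⟩ := hv; exact hx
  set S' : Set V := S \ {v} with hS'
  have hsub : S' ⊆ S := Set.diff_subset
  intro C hC
  obtain ⟨⟨c, rfl⟩, hbad⟩ := hC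
  -- every vertex of C is non-adjacent to v
  have hnonadj : ∀ u : V, u ∈ Subtype.val '' c.supp → ¬ G.Adj u v := by
    intro u hu hadj
    have huS' : u ∈ S' := by obtain ⟨⟨x, hx⟩, _, rfl⟩ := hu; exact hx
    have hbadu : badVtx G S' u := hbad u hu
    have hvN : v ∈ G.neighborSet u := hadj
    have h1 : G.neighborSet u ∩ S = insert v (G.neighborSet u ∩ S') := by
      ext w
      simp only [Set.mem_inter_iff, Set.mem_insert_iff, hS', Set.mem_diff,
        Set.mem_singleton_iff]
      constructor
      · rintro ⟨hw, hwS⟩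
        by_cases hwv : w = v
        · exact Or.inl hwv
        · exact Or.inr ⟨hw, hwS, hwv⟩
      · rintro (rfl | ⟨hw, hwS, _⟩)
        · exact ⟨hvN, hvS⟩
        · exact ⟨hw, hwS⟩
    have h2 : G.neighborSet u \ S' = insert v (G.neighborSet u \ S) := by
      ext w
      simp only [Set.mem_diff, Set.mem_insert_iff, hS', Set.mem_singleton_iff]
      constructor
      · rintro ⟨hw, hwS⟩
        by_cases hwv : w = v
        · exact Or.inl hwv
        · exact Or.inr ⟨hw, fun h => hwS ⟨h, hwv⟩⟩
      · rintro (rfl | ⟨hw, hwS⟩)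
        · exact ⟨hvN, fun h => h.2 rfl⟩
        · exact ⟨hw, fun h => hwS h.1⟩
    have hvn1 : v ∉ G.neighborSet u ∩ S' := by
      simp [hS']
    have hvn2 : v ∉ G.neighborSet u \ S := fun h => h.2 hvS
    have hcard1 : (G.neighborSet u ∩ S).ncard = (G.neighborSet u ∩ S').ncard + 1 := by
      rw [h1, Set.ncard_insert_of_notMem hvn1 (Set.toFinite _)]
    have hcard2 : (G.neighborSet u \ S').ncard = (G.neighborSet u \ S).ncard + 1 := by
      rw [h2, Set.ncard_insert_of_notMem hvn2 (Set.toFinite _)]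
    have hle := hproper.1 u huS'.1
    unfold badVtx at hbadu
    omega
  -- every vertex of C is bad w.r.t. S
  have hbadS : ∀ u : V, u ∈ Subtype.val '' c.supp → badVtx G S u := by
    intro u hu
    have hna := hnonadj u hu
    have h1 : G.neighborSet u ∩ S' = G.neighborSet u ∩ S := by
      ext w
      simp only [Set.mem_inter_iff, hS', Set.mem_diff, Set.mem_singleton_iff]
      constructor
      · rintro ⟨hw, hwS, _⟩; exact ⟨hw, hwS⟩
      · rintro ⟨hw, hwS⟩
        refine ⟨hw, hwS, ?_⟩
        rintro rfl; exact hna hw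
    have h2 : G.neighborSet u \ S' = G.neighborSet u \ S := by
      ext w
      simp only [Set.mem_diff, hS', Set.mem_singleton_iff]
      constructor
      · rintro ⟨hw, hwS⟩
        refine ⟨hw, fun hws => hwS ⟨hws, ?_⟩⟩
        rintro rfl; exact hna hw
      · rintro ⟨hw, hwS⟩; exact ⟨hw, fun h => hwS h.1⟩
    have := hbad u hu
    unfold badVtx at this ⊢
    rw [← h1, ← h2]; exact this
  -- C is a component of G[S]
  obtain ⟨u₀, hu₀⟩ := Quot.exists_rep c
  have hu₀C : (u₀ : V) ∈ Subtype.val '' c.supp := by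
    refine ⟨u₀, ?_, rfl⟩
    rw [SimpleGraph.ConnectedComponent.mem_supp_iff, ← hu₀]; rfl
  set d := (G.induce S).connectedComponentMk ⟨(u₀ : V), hsub u₀.2⟩ with hd
  -- forward closure: along walks in G.induce S, membership in C propagates
  have hclosed : ∀ (a b : S) (_ : (G.induce S).Walk a b),
      (a : V) ∈ Subtype.val '' c.supp → (b : V) ∈ Subtype.val '' c.supp := by
    intro a b p
    induction p with
    | nil => exact id
    | @cons x y z hxy p ih =>
      intro hx
      refine ih ?_
      obtain ⟨⟨x', hx'⟩, hxsupp, hxeq⟩ := hx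
      have hyv : (y : V) ≠ v := by
        rintro hyv
        have : G.Adj (x : V) v := by rw [← hyv]; exact hxy
        exact hnonadj (x : V) ⟨⟨x', hx'⟩, hxsupp, hxeq⟩ this
      have hyS' : (y : V) ∈ S' := ⟨y.2, hyv⟩
      have hadj' : (G.induce S').Adj ⟨(x : V), by rw [← hxeq]; exact hx'⟩ ⟨(y : V), hyS'⟩ := hxy
      refine ⟨⟨(y : V), hyS'⟩, ?_, rfl⟩
      rw [SimpleGraph.ConnectedComponent.mem_supp_iff]
      have hxc : (G.induce S').connectedComponentMk ⟨(x : V), by rw [← hxeq]; exact hx'⟩ = c := by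
        rw [SimpleGraph.ConnectedComponent.mem_supp_iff] at hxsupp
        have : (⟨(x : V), by rw [← hxeq]; exact hx'⟩ : S') = ⟨x', hx'⟩ :=
          Subtype.ext hxeq.symm
        rw [this]; exact hxsupp
      rw [← hxc]
      exact SimpleGraph.ConnectedComponent.eq.mpr (hadj'.symm.reachable)
  have hCd : Subtype.val '' c.supp = Subtype.val '' d.supp := by
    apply Set.Subset.antisymm
    · rintro _ ⟨⟨x, hxS'⟩, hxsupp, rfl⟩
      rw [SimpleGraph.ConnectedComponent.mem_supp_iff, ← hu₀] at hxsupp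
      have hreach : (G.induce S').Reachable ⟨x, hxS'⟩ u₀ :=
        SimpleGraph.ConnectedComponent.eq.mp hxsupp
      have hreach2 : (G.induce S).Reachable ⟨x, hsub hxS'⟩ ⟨(u₀ : V), hsub u₀.2⟩ := by
        have := hreach.map (G.induceHomOfLE hsub).toHom
        exact this
      refine ⟨⟨x, hsub hxS'⟩, ?_, rfl⟩
      rw [SimpleGraph.ConnectedComponent.mem_supp_iff, hd]
      exact SimpleGraph.ConnectedComponent.eq.mpr hreach2
    · rintro _ ⟨⟨x, hxS⟩, hxsupp, rfl⟩
      rw [SimpleGraph.ConnectedComponent.mem_supp_iff, hd] at hxsupp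
      have hreach : (G.induce S).Reachable ⟨(u₀ : V), hsub u₀.2⟩ ⟨x, hxS⟩ :=
        SimpleGraph.ConnectedComponent.eq.mp hxsupp.symm
      obtain ⟨p⟩ := hreach
      exact hclosed _ _ p hu₀C
  have hvnotC : v ∉ Subtype.val '' c.supp := by
    rintro ⟨⟨x, hx⟩, -, hxe⟩
    exact hx.2 hxe
  refine ⟨⟨⟨d, hCd⟩, hbadS⟩, ?_⟩
  simp only [Set.mem_singleton_iff]
  intro h
  rw [← h] at hv
  exact hvnotC hv
end

section
/- Let G(V,E) be a finite simple undirected connected graph, (S, V\S) a proper cut, G'(V',E') ∈ B(S) a bad connected component of G[S], v ∈ V', and v* ∈ V. Then Σ_{Ĥ(V̂,Ê)∈B(S\{v})} d(v*, V̂) ≤ (Σ_{Ĥ(V̂,Ê)∈B(S)} d(v*, V̂)) − d(v*, V'). -/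
namespace Stmt10Aux

open SimpleGraph Set

variable {V : Type*} {G : SimpleGraph V}

/-- The component class of `x` in `G[S]`, as a subset of `V`. -/
def cls (G : SimpleGraph V) (S : Set V) (x : V) (hx : x ∈ S) : Set V :=
  {y | ∃ hy : y ∈ S, (G.induce S).Reachable ⟨y, hy⟩ ⟨x, hx⟩}

lemma mem_comps_iff {S C : Set V} :
    C ∈ comps G S ↔ ∃ x, ∃ hx : x ∈ S, C = cls G S x hx := by
  constructor
  · rintro ⟨c, rfl⟩
    obtain ⟨x, hx⟩ := c.exists_rep
    refine ⟨x.1, x.2, ?_⟩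
    ext y
    simp only [mem_image, ConnectedComponent.mem_supp_iff, cls, mem_setOf_eq]
    constructor
    · rintro ⟨⟨y', hy'⟩, hmk, rfl⟩
      exact ⟨hy', ConnectedComponent.eq.mp (by rw [hmk, ← hx]; rfl)⟩
    · rintro ⟨hy, hr⟩
      exact ⟨⟨y, hy⟩, by rw [← hx]; exact ConnectedComponent.eq.mpr hr, rfl⟩
  · rintro ⟨x, hx, rfl⟩
    refine ⟨(G.induce S).connectedComponentMk ⟨x, hx⟩, ?_⟩
    ext y
    simp only [mem_image, ConnectedComponent.mem_supp_iff, cls, mem_setOf_eq]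
    constructor
    · rintro ⟨hy, hr⟩
      exact ⟨⟨y, hy⟩, ConnectedComponent.eq.mpr hr, rfl⟩
    · rintro ⟨⟨y', hy'⟩, hmk, rfl⟩
      exact ⟨hy', ConnectedComponent.eq.mp hmk⟩

/-- Lift reachability along a set inclusion. -/
lemma reach_mono {A B : Set V} (hAB : A ⊆ B) {x y : ↑A}
    (h : (G.induce A).Reachable x y) :
    (G.induce B).Reachable ⟨x.1, hAB x.2⟩ ⟨y.1, hAB y.2⟩ := by
  let f : G.induce A →g G.induce B :=
    { toFun := fun a => ⟨a.1, hAB a.2⟩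
      map_rel' := fun hadj => hadj }
  exact h.map f

/-- Push a walk down into `S \ {v}` when its start is not reachable from `v`. -/
lemma reach_del {S : Set V} {v : V} (hvS : v ∈ S) {a b : ↑S}
    (p : (G.induce S).Walk a b) :
    ∀ (_ : ¬ (G.induce S).Reachable a ⟨v, hvS⟩)
      (ha' : a.1 ∈ S \ {v}) (hb' : b.1 ∈ S \ {v}),
      (G.induce (S \ {v})).Reachable ⟨a.1, ha'⟩ ⟨b.1, hb'⟩ := by
  induction p with
  | nil => intro _ _ _; exact Reachable.refl _
  | @cons a c b h q ih =>
      intro hna ha' hb'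
      have hcv : (c : V) ≠ v := by
        intro he
        exact hna (Adj.reachable (by rwa [show c = ⟨v, hvS⟩ from Subtype.ext he] at h))
      have hnc : ¬ (G.induce S).Reachable c ⟨v, hvS⟩ := fun hr => hna ((Adj.reachable h).trans hr)
      have hadj : (G.induce (S \ {v})).Adj ⟨a.1, ha'⟩ ⟨c.1, ⟨c.2, hcv⟩⟩ := h
      exact (Adj.reachable hadj).trans (ih hnc ⟨c.2, hcv⟩ hb')

/-- Along a walk in `G[S]` ending at `v`, there is a neighbor of `v` reachable
from the start within `S \ {v}`. -/
lemma exists_adj_near {S : Set V} {v : V} {a b : ↑S}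
    (p : (G.induce S).Walk a b) :
    ∀ (_ : b.1 = v) (ha : a.1 ∈ S \ {v}),
      ∃ w, ∃ hw : w ∈ S \ {v}, G.Adj w v ∧
        (G.induce (S \ {v})).Reachable ⟨a.1, ha⟩ ⟨w, hw⟩ := by
  induction p with
  | nil => intro hb ha; exact absurd hb ha.2
  | @cons a c b h q ih =>
      intro hb ha
      by_cases hc : (c : V) = v
      · have h' : G.Adj a.1 c.1 := h
        rw [hc] at h'
        exact ⟨a.1, ha, h', Reachable.refl _⟩
      · obtain ⟨w, hw, hadj, hr⟩ := ih hb ⟨c.2, hc⟩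
        have hadj' : (G.induce (S \ {v})).Adj ⟨a.1, ha⟩ ⟨c.1, ⟨c.2, hc⟩⟩ := h
        exact ⟨w, hw, hadj, (Adj.reachable hadj').trans hr⟩

lemma cls_del {S : Set V} {v : V} (hvS : v ∈ S) {x : V} (hx : x ∈ S)
    (hnr : ¬ (G.induce S).Reachable ⟨x, hx⟩ ⟨v, hvS⟩) (hx' : x ∈ S \ {v}) :
    cls G S x hx = cls G (S \ {v}) x hx' := by
  ext y
  constructor
  · rintro ⟨hy, hr⟩
    have hr' := hr
    obtain ⟨p⟩ := hr
    have hyv : y ≠ v := by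
      intro he
      subst he
      exact hnr hr'.symm
    have hny : ¬ (G.induce S).Reachable ⟨y, hy⟩ ⟨v, hvS⟩ := fun h => hnr (hr'.symm.trans h)
    exact ⟨⟨hy, hyv⟩, reach_del hvS p hny ⟨hy, hyv⟩ hx'⟩
  · rintro ⟨hy, hr⟩
    exact ⟨hy.1, reach_mono diff_subset hr⟩

lemma badVtx_del_of_not_adj {S : Set V} {v u : V} (h : ¬ G.Adj u v) :
    badVtx G (S \ {v}) u ↔ badVtx G S u := by
  have h1 : G.neighborSet u ∩ (S \ {v}) = G.neighborSet u ∩ S := by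
    ext w
    simp only [mem_inter_iff, mem_diff, mem_singleton_iff, mem_neighborSet]
    constructor
    · rintro ⟨hw, hS, _⟩; exact ⟨hw, hS⟩
    · rintro ⟨hw, hS⟩
      refine ⟨hw, hS, ?_⟩
      rintro rfl; exact h hw
  have h2 : G.neighborSet u \ (S \ {v}) = G.neighborSet u \ S := by
    ext w
    simp only [mem_diff, mem_singleton_iff, mem_neighborSet]
    constructor
    · rintro ⟨hw, hS⟩
      refine ⟨hw, fun hwS => hS ⟨hwS, ?_⟩⟩
      rintro rfl; exact h hw
    · rintro ⟨hw, hS⟩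
      exact ⟨hw, fun hc => hS hc.1⟩
  unfold badVtx
  rw [h1, h2]

lemma not_badVtx_del {V : Type*} [Fintype V] {G : SimpleGraph V} {S : Set V} {v u : V}
    (hadj : G.Adj u v) (hvS : v ∈ S) (hbad : badVtx G S u) :
    ¬ badVtx G (S \ {v}) u := by
  intro hb
  have hvN : v ∈ G.neighborSet u := hadj
  have h1 : G.neighborSet u ∩ (S \ {v}) = (G.neighborSet u ∩ S) \ {v} := by
    ext w
    simp only [mem_inter_iff, mem_diff, mem_singleton_iff]
    tauto
  have h2 : G.neighborSet u \ (S \ {v}) = insert v (G.neighborSet u \ S) := by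
    ext w
    simp only [mem_diff, mem_singleton_iff, mem_insert_iff]
    constructor
    · rintro ⟨hw, hS⟩
      by_cases hwv : w = v
      · exact Or.inl hwv
      · exact Or.inr ⟨hw, fun hwS => hS ⟨hwS, hwv⟩⟩
    · rintro (rfl | ⟨hw, hS⟩)
      · exact ⟨hvN, fun hc => hc.2 rfl⟩
      · exact ⟨hw, fun hc => hS hc.1⟩
  have hvmem : v ∈ G.neighborSet u ∩ S := ⟨hvN, hvS⟩
  have hvnot : v ∉ G.neighborSet u \ S := fun hc => hc.2 hvS
  have hcard1 : ((G.neighborSet u ∩ S) \ {v}).ncard = (G.neighborSet u ∩ S).ncard - 1 :=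
    Set.ncard_diff_singleton_of_mem hvmem
  have hcard2 : (insert v (G.neighborSet u \ S)).ncard = (G.neighborSet u \ S).ncard + 1 :=
    Set.ncard_insert_of_notMem hvnot (Set.toFinite _)
  have hpos : 0 < (G.neighborSet u ∩ S).ncard :=
    (Set.ncard_pos (Set.toFinite _)).mpr ⟨v, hvmem⟩
  unfold badVtx at hb hbad
  rw [h1, h2, hcard1, hcard2] at hb
  omega

lemma badComps_del {V : Type*} [Fintype V] {G : SimpleGraph V} {S V' : Set V} {v : V}
    (hV' : V' ∈ badComps G S) (hv : v ∈ V') :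
    badComps G (S \ {v}) = badComps G S \ {V'} := by
  obtain ⟨hVc, hVbad⟩ := hV'
  obtain ⟨x0, hx0, hVx⟩ := mem_comps_iff.mp hVc
  have hv' : v ∈ cls G S x0 hx0 := by rw [← hVx]; exact hv
  obtain ⟨hvS, hrvx⟩ := hv'
  have hV'v : V' = cls G S v hvS := by
    rw [hVx]
    ext y
    exact ⟨fun ⟨hy, h⟩ => ⟨hy, h.trans hrvx.symm⟩, fun ⟨hy, h⟩ => ⟨hy, h.trans hrvx⟩⟩
  -- neighbors of v in S lie in V'
  have hnbr : ∀ u, G.Adj u v → u ∈ S → u ∈ V' := by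
    intro u hadj huS
    rw [hV'v]
    exact ⟨huS, Adj.reachable (by exact hadj : (G.induce S).Adj ⟨u, huS⟩ ⟨v, hvS⟩)⟩
  ext C
  constructor
  · rintro ⟨hCc, hCbad⟩
    obtain ⟨x, hx, rfl⟩ := mem_comps_iff.mp hCc
    by_cases hreach : (G.induce S).Reachable ⟨x, hx.1⟩ ⟨v, hvS⟩
    · -- impossible: some neighbor w of v in the component is bad w.r.t. S \ {v}
      exfalso
      obtain ⟨p⟩ := hreach
      obtain ⟨w, hw, hadj, hr⟩ := exists_adj_near p rfl hx
      have hwC : w ∈ cls G (S \ {v}) x hx := ⟨hw, hr.symm⟩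
      have hwV' : w ∈ V' := hnbr w hadj hw.1
      exact not_badVtx_del hadj hvS (hVbad w hwV') (hCbad w hwC)
    · -- C is an old component ≠ V'
      have hCeq := cls_del hvS hx.1 hreach hx
      have hCS : cls G (S \ {v}) x hx ∈ comps G S := mem_comps_iff.mpr ⟨x, hx.1, hCeq.symm⟩
      have hnadj : ∀ u ∈ cls G (S \ {v}) x hx, ¬ G.Adj u v := by
        intro u hu hadj
        rw [← hCeq] at hu
        obtain ⟨hu', hru⟩ := hu
        exact hreach (hru.symm.trans
          (Adj.reachable (by exact hadj : (G.induce S).Adj ⟨u, hu'⟩ ⟨v, hvS⟩)))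
      refine ⟨⟨hCS, fun u hu => (badVtx_del_of_not_adj (hnadj u hu)).mp (hCbad u hu)⟩, ?_⟩
      intro hCV'
      simp only [mem_singleton_iff] at hCV'
      have : v ∈ cls G (S \ {v}) x hx := hCV' ▸ hv
      exact this.choose.2 rfl
  · rintro ⟨⟨hCc, hCbad⟩, hne⟩
    simp only [mem_singleton_iff] at hne
    obtain ⟨x, hx, rfl⟩ := mem_comps_iff.mp hCc
    have hreach : ¬ (G.induce S).Reachable ⟨x, hx⟩ ⟨v, hvS⟩ := by
      intro hr
      apply hne
      rw [hV'v]
      ext y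
      exact ⟨fun ⟨hy, h⟩ => ⟨hy, h.trans hr⟩, fun ⟨hy, h⟩ => ⟨hy, h.trans hr.symm⟩⟩
    have hxv : x ≠ v := by
      rintro rfl
      exact hreach (Reachable.refl _)
    have hCeq := cls_del hvS hx hreach ⟨hx, hxv⟩
    have hnadj : ∀ u ∈ cls G S x hx, ¬ G.Adj u v := by
      intro u hu hadj
      obtain ⟨hu', hru⟩ := hu
      exact hreach (hru.symm.trans
        (Adj.reachable (by exact hadj : (G.induce S).Adj ⟨u, hu'⟩ ⟨v, hvS⟩)))
    exact ⟨mem_comps_iff.mpr ⟨x, ⟨hx, hxv⟩, hCeq⟩,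
      fun u hu => (badVtx_del_of_not_adj (hnadj u hu)).mpr (hCbad u hu)⟩

end Stmt10Aux

/-- Corollary: removing a vertex of a bad component `G'(V',E') ∈ B(S)` from
`S` decreases the sum of distances to bad components of the `S`-side by at
least `d(v*, V')`. -/
theorem stmt10 {V : Type*} [Fintype V] (G : SimpleGraph V) (hconn : G.Connected)
    (S : Set V) (hproper : properCut G S)
    (V' : Set V) (hV' : V' ∈ badComps G S) (v : V) (hv : v ∈ V') (vs : V) :
    (∑ᶠ C ∈ badComps G (S \ {v}), (dSet G vs C : ℤ))
      ≤ (∑ᶠ C ∈ badComps G S, (dSet G vs C : ℤ)) - (dSet G vs V' : ℤ) := by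
  classical
  rw [Stmt10Aux.badComps_del hV' hv]
  have hfin : (badComps G S).Finite := Set.toFinite _
  have h1 : (∑ᶠ C ∈ badComps G S, (dSet G vs C : ℤ)) = ∑ C ∈ hfin.toFinset, (dSet G vs C : ℤ) := by
    conv_lhs => rw [← hfin.coe_toFinset]
    rw [finsum_mem_coe_finset]
  have he : badComps G S \ {V'} = ↑(hfin.toFinset.erase V') := by
    rw [Finset.coe_erase, hfin.coe_toFinset]
  have h2 : (∑ᶠ C ∈ badComps G S \ {V'}, (dSet G vs C : ℤ))
      = ∑ C ∈ hfin.toFinset.erase V', (dSet G vs C : ℤ) := by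
    rw [he, finsum_mem_coe_finset]
  rw [h1, h2, Finset.sum_erase_eq_sub (hfin.mem_toFinset.mpr hV')]
end

section
/- Let G(V,E) be a finite simple undirected connected graph, (S, V\S) a proper cut, v ∈ S, and let Ḡ(V̄,Ē) be the connected component of G[(V\S) ∪ {v}] that contains v. Then B((V\S) ∪ {v}) ⊆ B(V\S) ∪ {Ḡ}; that is, every bad connected component of G[(V\S)∪{v}] with respect to the cut (S\{v}, (V\S)∪{v}) is either Ḡ or a bad connected component of G[V\S] with respect to (S, V\S). -/
lemma reach_transfer {V : Type*} {G : SimpleGraph V} {A B : Set V} {v : V}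
    (hsub : ∀ x ∈ B, x ≠ v → x ∈ A) :
    ∀ {a b : ↥B} (w : (G.induce B).Walk a b), (∀ x ∈ w.support, (x : V) ≠ v) →
    ∀ (ha : (a : V) ∈ A) (hb : (b : V) ∈ A), (G.induce A).Reachable ⟨a, ha⟩ ⟨b, hb⟩ := by
  intro a b w
  induction w with
  | nil =>
    intro _ ha hb
    exact SimpleGraph.Reachable.refl _
  | @cons a a' b h p ih =>
    intro hsup ha hb
    have ha' : (a' : V) ∈ A :=
      hsub _ a'.2 (hsup _ (by simp [SimpleGraph.Walk.support_cons]))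
    have hadj : (G.induce A).Adj ⟨a, ha⟩ ⟨a', ha'⟩ := by
      simpa using (by simpa using h : G.Adj (a : V) (a' : V))
    exact (hadj.reachable).trans
      (ih (fun x hx => hsup x (by simp [SimpleGraph.Walk.support_cons, hx])) ha' hb)


/-- Lemma: for a proper cut `(S, V\S)` and `v ∈ S`, every bad connected
component of `G[(V\S)∪{v}]` (w.r.t. the cut `(S\{v}, (V\S)∪{v})`) is either
the component `Ḡ(V̄,Ē)` containing `v` or a bad component of `G[V\S]`
(w.r.t. `(S, V\S)`). -/
theorem stmt11 {V : Type*} [Fintype V] (G : SimpleGraph V) (hconn : G.Connected)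
    (S : Set V) (hproper : properCut G S) (v : V) (hv : v ∈ S)
    (VBar : Set V) (hVBar : VBar ∈ comps G (Sᶜ ∪ {v})) (hvBar : v ∈ VBar) :
    badComps G (Sᶜ ∪ {v}) ⊆ badComps G Sᶜ ∪ {VBar} := by
  classical
  set T := Sᶜ ∪ {v} with hT
  have hvT : v ∈ T := Or.inr rfl
  rintro C ⟨⟨c, rfl⟩, hbad⟩
  by_cases hvC : v ∈ Subtype.val '' c.supp
  · right
    obtain ⟨d, hd⟩ := hVBar
    obtain ⟨x, hx, hxv⟩ := hvC
    obtain ⟨y, hy, hyv⟩ := (hd ▸ hvBar : v ∈ Subtype.val '' d.supp)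
    have hxy : x = y := Subtype.ext (hxv.trans hyv.symm)
    have hcd : c = d := by
      rw [← (SimpleGraph.ConnectedComponent.mem_supp_iff _ _).1 hx, hxy,
        (SimpleGraph.ConnectedComponent.mem_supp_iff _ _).1 hy]
    simp [hd, hcd]
  · left
    -- every element of C is in Sᶜ and not equal to v
    have hne : ∀ u ∈ Subtype.val '' c.supp, u ≠ v := by
      rintro u hu rfl; exact hvC hu
    have hCsub : ∀ u ∈ Subtype.val '' c.supp, u ∈ Sᶜ := by
      rintro u hu
      obtain ⟨x, hx, rfl⟩ := hu
      rcases x.2 with h | h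
      · exact h
      · exact absurd h (hne _ ⟨x, hx, rfl⟩)
    -- no vertex of C is adjacent to v
    have hnoadj : ∀ u ∈ Subtype.val '' c.supp, ¬ G.Adj u v := by
      rintro u ⟨x, hx, rfl⟩ hadj
      have hadj' : (G.induce T).Adj x ⟨v, hvT⟩ := by simpa using hadj
      have : (⟨v, hvT⟩ : ↥T) ∈ c.supp := by
        rw [SimpleGraph.ConnectedComponent.mem_supp_iff,
          ← (SimpleGraph.ConnectedComponent.mem_supp_iff _ _).1 hx]
        exact (SimpleGraph.ConnectedComponent.sound hadj'.symm.reachable)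
      exact hvC ⟨_, this, rfl⟩
    obtain ⟨x₀, hx₀⟩ := c.exists_rep
    have hx₀s : x₀ ∈ c.supp := by rwa [SimpleGraph.ConnectedComponent.mem_supp_iff]
    have hx₀A : (x₀ : V) ∈ Sᶜ := hCsub _ ⟨x₀, hx₀s, rfl⟩
    have hsub : ∀ z ∈ T, z ≠ v → z ∈ Sᶜ := by
      rintro z (h | h) hzv
      · exact h
      · exact absurd h hzv
    refine ⟨⟨(G.induce Sᶜ).connectedComponentMk ⟨(x₀ : V), hx₀A⟩, ?_⟩, ?_⟩
    · ext u
      constructor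
      · rintro ⟨y, hy, rfl⟩
        -- y reachable from x₀ in induce T
        have hreach : (G.induce T).Reachable x₀ y :=
          SimpleGraph.ConnectedComponent.exact
            (hx₀.trans ((SimpleGraph.ConnectedComponent.mem_supp_iff _ _).1 hy).symm)
        obtain ⟨w⟩ := hreach
        have hyA : (y : V) ∈ Sᶜ := hCsub _ ⟨y, hy, rfl⟩
        have hsup : ∀ z ∈ w.support, (z : V) ≠ v := by
          intro z hz
          have : z ∈ c.supp := by
            rw [SimpleGraph.ConnectedComponent.mem_supp_iff, ← hx₀]
            exact (SimpleGraph.ConnectedComponent.sound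
              ⟨(w.takeUntil z hz)⟩).symm
          exact hne _ ⟨z, this, rfl⟩
        have := reach_transfer hsub w hsup hx₀A hyA
        exact ⟨⟨(y : V), hyA⟩, by
          rw [SimpleGraph.ConnectedComponent.mem_supp_iff]
          exact (SimpleGraph.ConnectedComponent.sound this).symm, rfl⟩
      · rintro ⟨y, hy, rfl⟩
        have hreach : (G.induce Sᶜ).Reachable ⟨(x₀ : V), hx₀A⟩ y :=
          SimpleGraph.ConnectedComponent.exact
            ((SimpleGraph.ConnectedComponent.mem_supp_iff _ _).1 hy).symm
        have hmap : (G.induce T).Reachable x₀ ⟨(y : V), Or.inl y.2⟩ := by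
          have h0 := hreach.map
            (⟨fun z => ⟨z.1, Or.inl z.2⟩, fun {a b} h => by
              simpa using (by simpa using h : G.Adj (a : V) (b : V))⟩ :
              G.induce Sᶜ →g G.induce T)
          exact h0
        refine ⟨⟨(y : V), Or.inl y.2⟩, ?_, rfl⟩
        rw [SimpleGraph.ConnectedComponent.mem_supp_iff, ← hx₀]
        exact (SimpleGraph.ConnectedComponent.sound hmap).symm
    · intro u hu
      have hb := hbad u hu
      have hvnadj : v ∉ G.neighborSet u := fun h => hnoadj u hu h
      unfold badVtx at hb ⊢
      have h1 : G.neighborSet u ∩ T = G.neighborSet u ∩ Sᶜ := by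
        ext z
        simp only [Set.mem_inter_iff, hT, Set.mem_union, Set.mem_singleton_iff]
        constructor
        · rintro ⟨hz, h | h⟩
          · exact ⟨hz, h⟩
          · exact absurd (h ▸ hz) hvnadj
        · rintro ⟨hz, h⟩; exact ⟨hz, Or.inl h⟩
      have h2 : G.neighborSet u \ T = G.neighborSet u \ Sᶜ := by
        ext z
        simp only [Set.mem_diff, hT, Set.mem_union, Set.mem_singleton_iff]
        constructor
        · rintro ⟨hz, h⟩; exact ⟨hz, fun hc => h (Or.inl hc)⟩
        · rintro ⟨hz, h⟩
          refine ⟨hz, ?_⟩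
          rintro (hc | rfl)
          · exact h hc
          · exact hvnadj hz
      rw [← h1, ← h2]; exact hb
end

section
/- Let G(V,E) be a finite simple undirected connected graph, (S, V\S) a proper cut, v ∈ S, v* ∈ V, and let Ḡ(V̄,Ē) be the connected component of G[(V\S) ∪ {v}] that contains v. Then Σ_{Ĥ(V̂,Ê)∈B((V\S)∪{v})} d(v*, V̂) ≤ (Σ_{Ĥ(V̂,Ê)∈B(V\S)} d(v*, V̂)) + d(v*, V̄). -/
section helpers
variable {V : Type*} (G : SimpleGraph V)

lemma reach_of_supp_sub {s t : Set V} {u w : t} (p : (G.induce t).Walk u w)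
    (hp : ∀ x ∈ p.support, (x : V) ∈ s) :
    (G.induce s).Reachable ⟨u, hp u p.start_mem_support⟩ ⟨w, hp w p.end_mem_support⟩ := by
  induction p with
  | nil => exact SimpleGraph.Reachable.refl _
  | cons h q ih =>
    rename_i a b c
    have hb : (b : V) ∈ s := hp b (by simp)
    have ha : (a : V) ∈ s := hp a (by simp)
    have hadj : (G.induce s).Adj ⟨a, ha⟩ ⟨b, hb⟩ := by
      simpa using (by simpa using h : G.Adj a b)
    exact hadj.reachable.trans (ih (fun x hx => hp x (by simp [hx])))

lemma reach_mono {s t : Set V} (hst : s ⊆ t) {a b : s}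
    (h : (G.induce s).Reachable a b) :
    (G.induce t).Reachable ⟨a, hst a.2⟩ ⟨b, hst b.2⟩ :=
  h.map (SimpleGraph.induceHom (SimpleGraph.Hom.id) (fun x hx => hst hx))

lemma comps_eq_of_mem {s : Set V} {C D : Set V} (hC : C ∈ comps G s) (hD : D ∈ comps G s)
    {x : V} (hx : x ∈ C) (hx' : x ∈ D) : C = D := by
  obtain ⟨c, rfl⟩ := hC
  obtain ⟨d, rfl⟩ := hD
  obtain ⟨y, hy, rfl⟩ := hx
  obtain ⟨z, hz, hzy⟩ := hx'
  have : z = y := Subtype.ext hzy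
  subst this
  rw [SimpleGraph.ConnectedComponent.mem_supp_iff] at hy hz
  rw [hy] at hz
  rw [hz]

lemma key_transfer {S : Set V} {v : V} (hv : v ∈ S) {C : Set V}
    (hC : C ∈ badComps G (Sᶜ ∪ {v})) (hvC : v ∉ C) : C ∈ badComps G Sᶜ := by
  classical
  set T := Sᶜ ∪ {v} with hT
  obtain ⟨⟨c, rfl⟩, hbad⟩ := hC
  have hsubc : ∀ x : V, x ∈ Subtype.val '' c.supp → x ∈ Sᶜ := by
    intro x hx
    obtain ⟨y, hy, rfl⟩ := hx
    rcases y.2 with h | h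
    · exact h
    · exfalso
      apply hvC
      have hyv : (y : V) = v := h
      exact hyv ▸ Set.mem_image_of_mem _ hy
  -- pick a representative
  obtain ⟨u, hu0⟩ := c.exists_rep
  have hu : (G.induce T).connectedComponentMk u = c := hu0
  have huC : (u : V) ∈ Subtype.val '' c.supp :=
    Set.mem_image_of_mem _ (by rw [SimpleGraph.ConnectedComponent.mem_supp_iff]; exact hu)
  clear hu0
  have huS : (u : V) ∈ Sᶜ := hsubc _ huC
  -- v is not reachable from u in induce T
  have hvsupp : ∀ (x : V) (hx : x ∈ Subtype.val '' c.supp), True := fun _ _ => trivial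
  set c' := (G.induce Sᶜ).connectedComponentMk ⟨(u : V), huS⟩ with hc'
  have hsame : Subtype.val '' c.supp = Subtype.val '' c'.supp := by
    ext x
    constructor
    · rintro ⟨y, hy, rfl⟩
      rw [SimpleGraph.ConnectedComponent.mem_supp_iff] at hy
      have hreach : (G.induce T).Reachable u y := by
        rw [← SimpleGraph.ConnectedComponent.eq, hu, hy]
      obtain ⟨p⟩ := hreach
      have hps : ∀ z ∈ p.support, (z : V) ∈ Sᶜ := by
        intro z hz
        rcases z.2 with h | h
        · exact h
        · exfalso
          apply hvC
          have : (G.induce T).Reachable u z := ⟨p.takeUntil z hz⟩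
          have hzc : z ∈ c.supp := by
            rw [SimpleGraph.ConnectedComponent.mem_supp_iff, ← hu]
            exact (SimpleGraph.ConnectedComponent.sound this.symm)
          have hzv : (z : V) = v := h
          exact hzv ▸ Set.mem_image_of_mem Subtype.val hzc
      have := reach_of_supp_sub G p hps
      refine ⟨⟨(y : V), hps y p.end_mem_support⟩, ?_, rfl⟩
      rw [SimpleGraph.ConnectedComponent.mem_supp_iff, hc',
        SimpleGraph.ConnectedComponent.eq]
      exact this.symm
    · rintro ⟨y, hy, rfl⟩
      rw [SimpleGraph.ConnectedComponent.mem_supp_iff, hc',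
        SimpleGraph.ConnectedComponent.eq] at hy
      have hsub : Sᶜ ⊆ T := Set.subset_union_left
      have := reach_mono G hsub hy.symm
      refine ⟨⟨(y : V), hsub y.2⟩, ?_, rfl⟩
      rw [SimpleGraph.ConnectedComponent.mem_supp_iff, ← hu]
      exact SimpleGraph.ConnectedComponent.sound
        ((by exact this : (G.induce T).Reachable u ⟨(y : V), hsub y.2⟩).symm)
  refine ⟨⟨c', hsame⟩, ?_⟩
  -- badness transfers
  intro x hx
  have hbx := hbad x hx
  have hxT : x ∈ T := Set.subset_union_left (hsubc x hx)
  have hnv : v ∉ G.neighborSet x := by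
    intro hadj
    apply hvC
    have hadj' : (G.induce T).Adj ⟨x, hxT⟩ ⟨v, Set.mem_union_right _ rfl⟩ := by
      simpa using hadj
    obtain ⟨y, hy, hyx⟩ := hx
    have hyeq : y = ⟨x, hxT⟩ := Subtype.ext hyx
    subst hyeq
    rw [SimpleGraph.ConnectedComponent.mem_supp_iff] at hy
    have : (⟨v, Set.mem_union_right _ rfl⟩ : T) ∈ c.supp := by
      rw [SimpleGraph.ConnectedComponent.mem_supp_iff, ← hy,
        SimpleGraph.ConnectedComponent.eq]
      exact hadj'.reachable.symm
    simpa using Set.mem_image_of_mem Subtype.val this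
  have h1 : G.neighborSet x ∩ T = G.neighborSet x ∩ Sᶜ := by
    ext y
    simp only [Set.mem_inter_iff, hT, Set.mem_union, Set.mem_singleton_iff]
    constructor
    · rintro ⟨hy, h | h⟩
      · exact ⟨hy, h⟩
      · exact absurd (h ▸ hy) hnv
    · rintro ⟨hy, h⟩; exact ⟨hy, Or.inl h⟩
  have h2 : G.neighborSet x \ T = G.neighborSet x \ Sᶜ := by
    ext y
    simp only [Set.mem_diff, hT, Set.mem_union, Set.mem_singleton_iff]
    constructor
    · rintro ⟨hy, h⟩; exact ⟨hy, fun hc => h (Or.inl hc)⟩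
    · rintro ⟨hy, h⟩
      refine ⟨hy, ?_⟩
      rintro (hc | hc)
      · exact h hc
      · exact hnv (hc ▸ hy)
  unfold badVtx at hbx ⊢
  rw [← h1, ← h2]
  exact hbx

end helpers

/-- Corollary: moving `v ∈ S` to the other side of a proper cut increases the
sum of distances to bad components of the complement side by at most
`d(v*, V̄)`, where `Ḡ(V̄,Ē)` is the component of `G[(V\S)∪{v}]` containing
`v`. -/
theorem stmt12 {V : Type*} [Fintype V] (G : SimpleGraph V) (hconn : G.Connected)
    (S : Set V) (hproper : properCut G S) (v : V) (hv : v ∈ S) (vs : V)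
    (VBar : Set V) (hVBar : VBar ∈ comps G (Sᶜ ∪ {v})) (hvBar : v ∈ VBar) :
    (∑ᶠ C ∈ badComps G (Sᶜ ∪ {v}), dSet G vs C)
      ≤ (∑ᶠ C ∈ badComps G Sᶜ, dSet G vs C) + dSet G vs VBar := by
  classical
  have hkey : ∀ C ∈ badComps G (Sᶜ ∪ {v}), C ≠ VBar → C ∈ badComps G Sᶜ := by
    intro C hC hne
    refine key_transfer G hv hC ?_
    intro hvC
    exact hne (comps_eq_of_mem G hC.1 hVBar hvC hvBar)
  have hA : (badComps G (Sᶜ ∪ {v})).Finite := Set.toFinite _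
  have hB : (badComps G Sᶜ).Finite := Set.toFinite _
  rw [finsum_mem_eq_finite_toFinset_sum _ hA, finsum_mem_eq_finite_toFinset_sum _ hB]
  have hsub : hA.toFinset \ {VBar} ⊆ hB.toFinset := by
    intro C hC
    rw [Finset.mem_sdiff, Set.Finite.mem_toFinset, Finset.mem_singleton] at hC
    rw [Set.Finite.mem_toFinset]
    exact hkey C hC.1 hC.2
  calc ∑ C ∈ hA.toFinset, dSet G vs C
      ≤ ∑ C ∈ insert VBar (hA.toFinset \ {VBar}), dSet G vs C := by
        apply Finset.sum_le_sum_of_subset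
        intro x hx
        rcases eq_or_ne x VBar with rfl | h
        · exact Finset.mem_insert_self _ _
        · exact Finset.mem_insert_of_mem (Finset.mem_sdiff.mpr ⟨hx, by simpa using h⟩)
    _ = dSet G vs VBar + ∑ C ∈ hA.toFinset \ {VBar}, dSet G vs C :=
        Finset.sum_insert (by simp)
    _ ≤ dSet G vs VBar + ∑ C ∈ hB.toFinset, dSet G vs C := by
        exact Nat.add_le_add_left (Finset.sum_le_sum_of_subset hsub) _
    _ = _ := Nat.add_comm _ _
end

section
/- Every finite simple undirected connected graph G(V,E) admits a proper cut (S, V\S) such that |B(S) ∪ B(V\S)| ≤ 1, i.e., G[S] and G[V\S] together have at most one bad connected component with respect to (S, V\S). -/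
namespace StmtAux

variable {V : Type*} {G : SimpleGraph V} {S T C C' C₀ : Set V} {v w x y z : V}

/-! ### The graph `G` restricted to a vertex set `S`, kept on the vertex type `V` -/

def within (G : SimpleGraph V) (S : Set V) : SimpleGraph V where
  Adj x y := G.Adj x y ∧ x ∈ S ∧ y ∈ S
  symm := ⟨fun x y ⟨h, hx, hy⟩ => ⟨h.symm, hy, hx⟩⟩
  loopless := ⟨fun x ⟨h, _⟩ => G.loopless.irrefl x h⟩

/-- The connected component of `x` in `G[S]`, as a subset of `V`. -/
def cpt (G : SimpleGraph V) (S : Set V) (x : V) : Set V :=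
  {y | y ∈ S ∧ (within G S).Reachable x y}

lemma mem_cpt_self (hx : x ∈ S) : x ∈ cpt G S x := ⟨hx, SimpleGraph.Reachable.refl x⟩

lemma cpt_subset : cpt G S x ⊆ S := fun _ h => h.1

lemma cpt_eq_of_mem (h : y ∈ cpt G S x) : cpt G S y = cpt G S x := by
  ext z
  exact ⟨fun hz => ⟨hz.1, h.2.trans hz.2⟩, fun hz => ⟨hz.1, h.2.symm.trans hz.2⟩⟩

lemma adj_mem_cpt (h : y ∈ cpt G S x) (ha : G.Adj y z) (hz : z ∈ S) : z ∈ cpt G S x :=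
  ⟨hz, h.2.trans (SimpleGraph.Adj.reachable ⟨ha, h.1, hz⟩)⟩

lemma within_mono (hst : S ⊆ T) : within G S ≤ within G T :=
  fun _ _ h => ⟨h.1, hst h.2.1, hst h.2.2⟩

/-- If the component of `x` in `G[T]` is contained in `S ⊆ T`, it is also
its component in `G[S]`. -/
lemma cpt_congr (hst : S ⊆ T) (hx : x ∈ S) (h : ∀ y ∈ cpt G T x, y ∈ S) :
    cpt G T x = cpt G S x := by
  have key : ∀ {a b : V}, (within G T).Walk a b → a ∈ cpt G T x →
      (within G S).Reachable a b := by
    intro a b W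
    induction W with
    | nil => exact fun _ => SimpleGraph.Reachable.refl _
    | @cons a c b hadj p ih =>
      intro ha
      have hc : c ∈ cpt G T x := adj_mem_cpt ha hadj.1 hadj.2.2
      have hadj' : (within G S).Adj a c := ⟨hadj.1, h a ha, h c hc⟩
      exact (SimpleGraph.Adj.reachable hadj').trans (ih hc)
  ext y
  constructor
  · rintro ⟨hyT, hr⟩
    obtain ⟨W⟩ := hr
    exact ⟨h y ⟨hyT, ⟨W⟩⟩, key W (mem_cpt_self (hst hx))⟩
  · rintro ⟨hyS, hr⟩
    exact ⟨hst hyS, hr.mono (within_mono hst)⟩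

lemma exists_adj_aux {a b : V} (W : (within G S).Walk a b) (hab : a ≠ b) :
    ∃ w, G.Adj b w ∧ w ∈ cpt G (S \ {b}) a := by
  induction W with
  | nil => exact absurd rfl hab
  | @cons a c b hadj p ih =>
    by_cases hc : c = b
    · subst hc
      exact ⟨a, hadj.1.symm, mem_cpt_self ⟨hadj.2.1, hab⟩⟩
    · obtain ⟨w, hw1, hw2⟩ := ih hc
      have hadj' : (within G (S \ {b})).Adj a c :=
        ⟨hadj.1, ⟨hadj.2.1, hab⟩, ⟨hadj.2.2, hc⟩⟩
      have hcmem : c ∈ cpt G (S \ {b}) a :=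
        adj_mem_cpt (mem_cpt_self hadj'.2.1) hadj.1 hadj'.2.2
      exact ⟨w, hw1, (cpt_eq_of_mem hcmem) ▸ hw2⟩

/-- If `v` lies in the component of `x` in `G[S]` (with `x ≠ v`), then some
`G`-neighbor of `v` lies in the component of `x` in `G[S \ {v}]`. -/
lemma exists_adj_cpt_diff (hxv : x ≠ v) (h : v ∈ cpt G S x) :
    ∃ w, G.Adj v w ∧ w ∈ cpt G (S \ {v}) x := by
  obtain ⟨hvS, ⟨W⟩⟩ := h
  exact exists_adj_aux W hxv

/-! ### Characterization of `comps` via `cpt` -/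

lemma within_reachable_of_induce {a b : ↥S} (h : (G.induce S).Reachable a b) :
    (within G S).Reachable a.val b.val := by
  obtain ⟨W⟩ := h
  induction W with
  | nil => exact SimpleGraph.Reachable.refl _
  | @cons p q r hadj W ih =>
    exact (SimpleGraph.Adj.reachable
      (⟨hadj, p.2, q.2⟩ : (within G S).Adj p.val q.val)).trans ih

lemma induce_reachable_of_within {a b : V} (W : (within G S).Walk a b)
    (ha : a ∈ S) (hb : b ∈ S) : (G.induce S).Reachable ⟨a, ha⟩ ⟨b, hb⟩ := by
  induction W with
  | nil => exact SimpleGraph.Reachable.refl _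
  | @cons p q r hadj W ih =>
    exact (SimpleGraph.Adj.reachable
      (by exact hadj.1 : (G.induce S).Adj ⟨p, ha⟩ ⟨q, hadj.2.2⟩)).trans (ih hadj.2.2 hb)

lemma comps_eq : comps G S = {C | ∃ x ∈ S, C = cpt G S x} := by
  ext C
  constructor
  · rintro ⟨c, rfl⟩
    obtain ⟨⟨x, hx⟩, hc⟩ := c.exists_rep
    subst hc
    refine ⟨x, hx, ?_⟩
    ext y
    have hq : (Quot.mk _ (⟨x, hx⟩ : ↥S) : (G.induce S).ConnectedComponent)
        = (G.induce S).connectedComponentMk ⟨x, hx⟩ := rfl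
    rw [hq]
    simp only [Set.mem_image, SimpleGraph.ConnectedComponent.mem_supp_iff,
      SimpleGraph.ConnectedComponent.eq]
    constructor
    · rintro ⟨⟨y', hy'⟩, hr, rfl⟩
      exact ⟨hy', (within_reachable_of_induce hr).symm⟩
    · rintro ⟨hy, ⟨W⟩⟩
      exact ⟨⟨y, hy⟩, (induce_reachable_of_within W hx hy).symm, rfl⟩
  · rintro ⟨x, hx, rfl⟩
    refine ⟨(G.induce S).connectedComponentMk ⟨x, hx⟩, ?_⟩
    ext y
    simp only [Set.mem_image, SimpleGraph.ConnectedComponent.mem_supp_iff,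
      SimpleGraph.ConnectedComponent.eq]
    constructor
    · rintro ⟨hy, ⟨W⟩⟩
      exact ⟨⟨y, hy⟩, (induce_reachable_of_within W hx hy).symm, rfl⟩
    · rintro ⟨⟨y', hy'⟩, hr, rfl⟩
      exact ⟨hy', (within_reachable_of_induce hr).symm⟩

lemma mem_comps_iff : C ∈ comps G S ↔ ∃ x ∈ S, C = cpt G S x := by
  rw [comps_eq]; rfl

lemma comps_subset (hC : C ∈ comps G S) : C ⊆ S := by
  rw [mem_comps_iff] at hC
  obtain ⟨x, hx, rfl⟩ := hC
  exact cpt_subset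

lemma comps_nonempty (hC : C ∈ comps G S) : C.Nonempty := by
  rw [mem_comps_iff] at hC
  obtain ⟨x, hx, rfl⟩ := hC
  exact ⟨x, mem_cpt_self hx⟩

lemma eq_cpt_of_mem (hC : C ∈ comps G S) (hw : w ∈ C) : C = cpt G S w := by
  rw [mem_comps_iff] at hC
  obtain ⟨x, hx, rfl⟩ := hC
  exact (cpt_eq_of_mem hw).symm

lemma comps_adj_closed (hC : C ∈ comps G S) (hw : w ∈ C) (ha : G.Adj w z)
    (hz : z ∈ S) : z ∈ C := by
  have hc := eq_cpt_of_mem hC hw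
  rw [hc] at hw ⊢
  exact adj_mem_cpt hw ha hz

lemma comps_disjoint (hC : C ∈ comps G S) (hC' : C' ∈ comps G S) (hne : C ≠ C') :
    Disjoint C C' := by
  rw [Set.disjoint_left]
  intro z hz hz'
  exact hne ((eq_cpt_of_mem hC hz).trans (eq_cpt_of_mem hC' hz').symm)

/-! ### Degrees into and out of a set, and cut size manipulation -/

noncomputable def ind (G : SimpleGraph V) (S : Set V) (v : V) : ℕ :=
  (G.neighborSet v ∩ S).ncard

noncomputable def outd (G : SimpleGraph V) (S : Set V) (v : V) : ℕ :=
  (G.neighborSet v \ S).ncard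

lemma outd_eq_ind_compl : outd G S v = ind G Sᶜ v := by
  rw [outd, ind, Set.diff_eq]

lemma ind_eq_outd_compl : ind G S v = outd G Sᶜ v := by
  rw [outd_eq_ind_compl, compl_compl]

lemma badVtx_iff : badVtx G S v ↔ ind G S v = outd G S v := Iff.rfl

lemma properCut_iff :
    properCut G S ↔ (∀ v ∈ S, ind G S v ≤ outd G S v) ∧
      (∀ v ∉ S, outd G S v ≤ ind G S v) := Iff.rfl

lemma badVtx_compl : badVtx G Sᶜ v ↔ badVtx G S v := by
  rw [badVtx_iff, badVtx_iff, ← outd_eq_ind_compl, ← ind_eq_outd_compl, eq_comm]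

section Deg
variable [Fintype V]

lemma ind_diff_add_one (hv : v ∈ S) (ha : G.Adj w v) :
    ind G (S \ {v}) w + 1 = ind G S w := by
  rw [ind, ind, show G.neighborSet w ∩ (S \ {v}) = (G.neighborSet w ∩ S) \ {v} by
    ext z; simp; tauto]
  exact Set.ncard_diff_singleton_add_one ⟨ha, hv⟩ (Set.toFinite _)

lemma outd_diff_add_one (hv : v ∈ S) (ha : G.Adj w v) :
    outd G (S \ {v}) w = outd G S w + 1 := by
  rw [outd, outd, show G.neighborSet w \ (S \ {v}) = insert v (G.neighborSet w \ S) by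
    ext z
    simp only [Set.mem_diff, Set.mem_singleton_iff, Set.mem_insert_iff,
      SimpleGraph.mem_neighborSet]
    constructor
    · rintro ⟨h1, h2⟩
      by_cases hz : z = v
      · exact Or.inl hz
      · exact Or.inr ⟨h1, fun hzS => h2 ⟨hzS, hz⟩⟩
    · rintro (rfl | ⟨h1, h2⟩)
      · exact ⟨ha, fun h => h.2 rfl⟩
      · exact ⟨h1, fun h => h2 h.1⟩]
  exact Set.ncard_insert_of_notMem (fun h => h.2 hv) (Set.toFinite _)

end Deg

lemma ind_diff_eq (hna : ¬ G.Adj w v) : ind G (S \ {v}) w = ind G S w := by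
  rw [ind, ind]
  congr 1
  ext z
  simp only [Set.mem_inter_iff, SimpleGraph.mem_neighborSet, Set.mem_diff,
    Set.mem_singleton_iff]
  constructor
  · tauto
  · rintro ⟨h1, h2⟩
    exact ⟨h1, h2, fun hz => hna (hz ▸ h1)⟩

lemma outd_diff_eq (hna : ¬ G.Adj w v) :
    outd G (S \ {v}) w = outd G S w := by
  rw [outd, outd]
  congr 1
  ext z
  simp only [Set.mem_diff, Set.mem_singleton_iff, SimpleGraph.mem_neighborSet]
  constructor
  · rintro ⟨h1, h2⟩
    exact ⟨h1, fun hz => h2 ⟨hz, fun hzv => hna (hzv ▸ h1)⟩⟩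
  · rintro ⟨h1, h2⟩
    exact ⟨h1, fun hz => h2 hz.1⟩

lemma badVtx_diff_of_not_adj (hna : ¬ G.Adj w v) :
    badVtx G (S \ {v}) w ↔ badVtx G S w := by
  rw [badVtx_iff, badVtx_iff, ind_diff_eq hna, outd_diff_eq hna]

lemma ind_union_self : ind G (S ∪ {w}) w = ind G S w := by
  rw [ind, ind]
  congr 1
  ext z
  simp only [Set.mem_inter_iff, SimpleGraph.mem_neighborSet, Set.mem_union,
    Set.mem_singleton_iff]
  constructor
  · rintro ⟨h1, h2 | h2⟩
    · exact ⟨h1, h2⟩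
    · exact absurd (h2 ▸ h1) (G.loopless.irrefl w)
  · rintro ⟨h1, h2⟩
    exact ⟨h1, Or.inl h2⟩

lemma outd_union_self : outd G (S ∪ {w}) w = outd G S w := by
  rw [outd, outd]
  congr 1
  ext z
  simp only [Set.mem_diff, SimpleGraph.mem_neighborSet, Set.mem_union,
    Set.mem_singleton_iff]
  constructor
  · rintro ⟨h1, h2⟩
    exact ⟨h1, fun h => h2 (Or.inl h)⟩
  · rintro ⟨h1, h2⟩
    refine ⟨h1, fun h => ?_⟩
    rcases h with h | h
    · exact h2 h
    · exact absurd (h ▸ h1) (G.loopless.irrefl w)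

section Cut
variable [Fintype V]

lemma cutE_diff_singleton (hv : v ∈ S) :
    cutE G (S \ {v}) + outd G S v = cutE G S + ind G S v := by
  set K := {p : V × V | G.Adj p.1 p.2 ∧ p.1 ∈ S \ {v} ∧ p.2 ∉ S} with hK
  have hKfin : K.Finite := Set.toFinite _
  have h1 : {p : V × V | G.Adj p.1 p.2 ∧ p.1 ∈ S \ {v} ∧ p.2 ∉ S \ {v}}
      = K ∪ (fun a => (a, v)) '' (G.neighborSet v ∩ S) := by
    ext ⟨a, b⟩
    simp only [hK, Set.mem_setOf_eq, Set.mem_union, Set.mem_image, Set.mem_inter_iff,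
      SimpleGraph.mem_neighborSet, Set.mem_diff, Set.mem_singleton_iff, Prod.mk.injEq]
    by_cases hb : b = v
    · subst hb
      constructor
      · rintro ⟨h1, ⟨h2, h3⟩, -⟩
        exact Or.inr ⟨a, ⟨h1.symm, h2⟩, rfl, rfl⟩
      · rintro (⟨-, -, h3⟩ | ⟨x, ⟨hx1, hx2⟩, rfl, -⟩)
        · exact absurd hv h3
        · exact ⟨hx1.symm, ⟨hx2, hx1.ne'⟩, fun h => h.2 rfl⟩
    · constructor
      · rintro ⟨h1, h2, h3⟩
        exact Or.inl ⟨h1, h2, fun hbS => h3 ⟨hbS, hb⟩⟩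
      · rintro (⟨h1, h2, h3⟩ | ⟨x, -, -, hxv⟩)
        · exact ⟨h1, h2, fun h => h3 h.1⟩
        · exact absurd hxv.symm hb
  have h2 : {p : V × V | G.Adj p.1 p.2 ∧ p.1 ∈ S ∧ p.2 ∉ S}
      = K ∪ (fun b => (v, b)) '' (G.neighborSet v \ S) := by
    ext ⟨a, b⟩
    simp only [hK, Set.mem_setOf_eq, Set.mem_union, Set.mem_image, Set.mem_diff,
      SimpleGraph.mem_neighborSet, Set.mem_singleton_iff, Prod.mk.injEq]
    by_cases ha : a = v
    · subst ha
      constructor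
      · rintro ⟨h1, -, h3⟩
        exact Or.inr ⟨b, ⟨h1, h3⟩, rfl, rfl⟩
      · rintro (⟨-, ⟨-, h⟩, -⟩ | ⟨x, ⟨hx1, hx2⟩, -, rfl⟩)
        · exact absurd rfl h
        · exact ⟨hx1, hv, hx2⟩
    · constructor
      · rintro ⟨h1, h2, h3⟩
        exact Or.inl ⟨h1, ⟨h2, ha⟩, h3⟩
      · rintro (⟨h1, ⟨h2, -⟩, h3⟩ | ⟨x, -, hxv, -⟩)
        · exact ⟨h1, h2, h3⟩
        · exact absurd hxv.symm ha
  have hd1 : Disjoint K ((fun a => (a, v)) '' (G.neighborSet v ∩ S)) := by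
    rw [Set.disjoint_left]
    rintro ⟨a, b⟩ hK1 ⟨x, -, heq⟩
    obtain ⟨-, -, h3⟩ := hK1
    obtain ⟨-, rfl⟩ := Prod.mk.injEq .. ▸ heq
    exact h3 hv
  have hd2 : Disjoint K ((fun b => (v, b)) '' (G.neighborSet v \ S)) := by
    rw [Set.disjoint_left]
    rintro ⟨a, b⟩ hK1 ⟨x, -, heq⟩
    obtain ⟨-, ⟨-, h2⟩, -⟩ := hK1
    obtain ⟨rfl, -⟩ := Prod.mk.injEq .. ▸ heq
    exact h2 rfl
  have hi1 : Function.Injective (fun a : V => (a, v)) := fun a b h => (Prod.mk.injEq .. ▸ h).1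
  have hi2 : Function.Injective (fun b : V => (v, b)) := fun a b h => (Prod.mk.injEq .. ▸ h).2
  rw [cutE, cutE, h1, h2, Set.ncard_union_eq hd1 hKfin (Set.toFinite _),
    Set.ncard_union_eq hd2 hKfin (Set.toFinite _),
    Set.ncard_image_of_injective _ hi1, Set.ncard_image_of_injective _ hi2]
  rw [ind, outd]
  ring

lemma cutE_diff_singleton_of_bad (hv : v ∈ S) (hbad : badVtx G S v) :
    cutE G (S \ {v}) = cutE G S := by
  have h := cutE_diff_singleton (G := G) hv
  rw [badVtx_iff] at hbad
  omega

end Cut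

lemma cutE_compl : cutE G Sᶜ = cutE G S := by
  rw [cutE, cutE, show {p : V × V | G.Adj p.1 p.2 ∧ p.1 ∈ Sᶜ ∧ p.2 ∉ Sᶜ}
      = Prod.swap '' {p : V × V | G.Adj p.1 p.2 ∧ p.1 ∈ S ∧ p.2 ∉ S} by
    ext ⟨a, b⟩
    simp only [Set.mem_setOf_eq, Set.mem_image, Set.mem_compl_iff, Prod.exists,
      Prod.swap_prod_mk, Prod.mk.injEq, not_not]
    constructor
    · rintro ⟨h1, h2, h3⟩
      exact ⟨b, a, ⟨h1.symm, h3, h2⟩, rfl, rfl⟩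
    · rintro ⟨p, q, ⟨h1, h2, h3⟩, rfl, rfl⟩
      exact ⟨h1.symm, h3, h2⟩]
  exact Set.ncard_image_of_injective _ Prod.swap_injective

/-! ### Distances -/

lemma dSet_le (hc : y ∈ C) : dSet G x C ≤ G.dist x y :=
  Nat.sInf_le ⟨y, hc, rfl⟩

lemma exists_dSet (hC : C.Nonempty) : ∃ c ∈ C, G.dist x c = dSet G x C := by
  have := Nat.sInf_mem (hC.image (G.dist x))
  obtain ⟨c, hc, hdc⟩ := this
  exact ⟨c, hc, hdc⟩

lemma dist_lt_card [Fintype V] (hconn : G.Connected) (u v : V) :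
    G.dist u v < Fintype.card V := by
  classical
  obtain ⟨W⟩ := hconn.preconnected u v
  have hp := W.toPath.2.length_lt
  exact lt_of_le_of_lt (SimpleGraph.dist_le _) hp

lemma dSet_lt_card [Fintype V] (hconn : G.Connected) (hC : C.Nonempty) (x : V) :
    dSet G x C < Fintype.card V := by
  obtain ⟨c, hc, hdc⟩ := exists_dSet (x := x) (G := G) hC
  exact hdc ▸ dist_lt_card hconn x c

lemma exists_adj_dist_pred (hconn : G.Connected) (hd : 1 ≤ G.dist x v) :
    ∃ u, G.Adj v u ∧ G.dist x u + 1 = G.dist x v := by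
  obtain ⟨W, hW⟩ := (hconn.preconnected x v).exists_walk_length_eq_dist
  have hne : v ≠ x := by
    rintro rfl
    rw [SimpleGraph.dist_self] at hd
    omega
  obtain ⟨u, hadj, q, hq⟩ := W.reverse.exists_eq_cons_of_ne hne
  have hlen : q.length + 1 = G.dist x v := by
    have h1 : W.reverse.length = W.length := SimpleGraph.Walk.length_reverse W
    rw [hq] at h1
    simp only [SimpleGraph.Walk.length_cons] at h1
    omega
  have h2 : G.dist x u ≤ q.length := by
    have := SimpleGraph.dist_le q.reverse
    rwa [SimpleGraph.Walk.length_reverse] at this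
  have h3 : G.dist x v ≤ G.dist x u + 1 := by
    have ht := hconn.dist_triangle (u := x) (v := u) (w := v)
    have hd1 : G.dist u v ≤ 1 := by
      have := SimpleGraph.dist_le (SimpleGraph.Walk.cons hadj.symm SimpleGraph.Walk.nil)
      simpa using this
    omega
  exact ⟨u, hadj, by omega⟩

/-! ### Bounds on the bad-component sums -/

lemma badComps_subset_comps : badComps G S ⊆ comps G S := fun _ h => h.1

lemma union_badComps_disjoint (hC : C ∈ badComps G S ∪ badComps G Sᶜ)
    (hC' : C' ∈ badComps G S ∪ badComps G Sᶜ) (hne : C ≠ C') : Disjoint C C' := by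
  rcases hC with hC | hC <;> rcases hC' with hC' | hC'
  · exact comps_disjoint hC.1 hC'.1 hne
  · rw [Set.disjoint_left]
    intro a haC haC'
    exact (comps_subset hC'.1 haC') (comps_subset hC.1 haC)
  · rw [Set.disjoint_left]
    intro a haC haC'
    exact (comps_subset hC.1 haC) (comps_subset hC'.1 haC')
  · exact comps_disjoint hC.1 hC'.1 hne

section Sums
variable [Fintype V]

lemma bsum_eq (G : SimpleGraph V) (S : Set V) (x : V) :
    (∑ᶠ C ∈ badComps G S, (dSet G x C : ℤ))
      = ∑ C ∈ (Set.toFinite (badComps G S)).toFinset, (dSet G x C : ℤ) :=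
  finsum_mem_eq_finite_toFinset_sum _ _

lemma bsum_nonneg (G : SimpleGraph V) (S : Set V) (x : V) :
    0 ≤ ∑ᶠ C ∈ badComps G S, (dSet G x C : ℤ) := by
  rw [bsum_eq]
  exact Finset.sum_nonneg fun _ _ => Int.natCast_nonneg _

lemma bsum_le (hconn : G.Connected) (S : Set V) (x : V) :
    (∑ᶠ C ∈ badComps G S, (dSet G x C : ℤ))
      ≤ ((badComps G S).ncard : ℤ) * ((Fintype.card V : ℤ) - 1) := by
  rw [bsum_eq, Set.ncard_eq_toFinset_card _ (Set.toFinite (badComps G S))]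
  have := Finset.sum_le_card_nsmul ((Set.toFinite (badComps G S)).toFinset)
    (fun C => (dSet G x C : ℤ)) ((Fintype.card V : ℤ) - 1) ?_
  · simpa [nsmul_eq_mul] using this
  · intro C hC
    rw [Set.Finite.mem_toFinset] at hC
    have h1 : dSet G x C < Fintype.card V :=
      dSet_lt_card hconn (comps_nonempty (badComps_subset_comps hC)) x
    have h2 : (dSet G x C : ℤ) ≤ (Fintype.card V : ℤ) - 1 := by omega
    simpa using h2

lemma ncard_badComps_union_le (hconn : G.Connected) (G' : SimpleGraph V) :
    (badComps G S ∪ badComps G Sᶜ).ncard ≤ Fintype.card V := by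
  classical
  have hne : Nonempty V := hconn.nonempty
  have key := Set.ncard_le_ncard_of_injOn (s := badComps G S ∪ badComps G Sᶜ)
    (t := Set.univ)
    (fun C : Set V => if h : C.Nonempty then h.some else Classical.arbitrary V)
    (fun C _ => Set.mem_univ _) ?_ (Set.finite_univ (α := V))
  · rwa [Set.ncard_univ, Nat.card_eq_fintype_card] at key
  · intro C hC C' hC' hf
    by_contra hne'
    have h1 : C.Nonempty := by
      rcases hC with h | h
      · exact comps_nonempty h.1
      · exact comps_nonempty h.1
    have h2 : C'.Nonempty := by
      rcases hC' with h | h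
      · exact comps_nonempty h.1
      · exact comps_nonempty h.1
    simp only [dif_pos h1, dif_pos h2] at hf
    have hd := union_badComps_disjoint hC hC' hne'
    rw [Set.disjoint_left] at hd
    exact hd h1.some_mem (hf ▸ h2.some_mem)

lemma sigma_le (hconn : G.Connected) (S : Set V) (x : V) :
    (∑ᶠ C ∈ badComps G S, (dSet G x C : ℤ)) + (∑ᶠ C ∈ badComps G Sᶜ, (dSet G x C : ℤ))
      ≤ (Fintype.card V : ℤ) ^ 2 - (Fintype.card V : ℤ) := by
  have hBc : Disjoint (badComps G S) (badComps G Sᶜ) := by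
    rw [Set.disjoint_left]
    intro C hC hC'
    obtain ⟨a, ha⟩ := comps_nonempty hC.1
    exact (comps_subset hC'.1 ha) (comps_subset hC.1 ha)
  have hcard : ((badComps G S).ncard : ℤ) + ((badComps G Sᶜ).ncard : ℤ)
      ≤ (Fintype.card V : ℤ) := by
    have h1 := Set.ncard_union_eq hBc (Set.toFinite _) (Set.toFinite _)
    have h2 := ncard_badComps_union_le (S := S) hconn G
    rw [h1] at h2
    exact_mod_cast h2
  have hn1 : (1 : ℤ) ≤ (Fintype.card V : ℤ) := by
    have : 0 < Fintype.card V := Fintype.card_pos_iff.mpr hconn.nonempty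
    exact_mod_cast this
  have b1 := bsum_le hconn S x
  have b2 := bsum_le hconn Sᶜ x
  have c1 : (0 : ℤ) ≤ ((badComps G S).ncard : ℤ) := Int.natCast_nonneg _
  have c2 : (0 : ℤ) ≤ ((badComps G Sᶜ).ncard : ℤ) := Int.natCast_nonneg _
  nlinarith [sq_nonneg ((Fintype.card V : ℤ) - 1)]

lemma psi_lt_psi_of_cut_lt (hconn : G.Connected) {x : V}
    (h : cutE G S + 1 ≤ cutE G T) : psi G S x < psi G T x := by
  rw [psi, psi]
  have h1 := sigma_le hconn T x
  have h2 := bsum_nonneg G S x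
  have h3 := bsum_nonneg G Sᶜ x
  have hc : (cutE G S : ℤ) + 1 ≤ (cutE G T : ℤ) := by exact_mod_cast h
  have hn1 : (1 : ℤ) ≤ (Fintype.card V : ℤ) := by
    have : 0 < Fintype.card V := Fintype.card_pos_iff.mpr hconn.nonempty
    exact_mod_cast this
  have hsq : (0 : ℤ) ≤ (Fintype.card V : ℤ) ^ 2 := sq_nonneg _
  have hmul : ((cutE G S : ℤ) + 1) * (Fintype.card V : ℤ) ^ 2
      ≤ (cutE G T : ℤ) * (Fintype.card V : ℤ) ^ 2 :=
    mul_le_mul_of_nonneg_right hc hsq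
  have hnn : (Fintype.card V : ℤ) ≤ (Fintype.card V : ℤ) ^ 2 := by nlinarith
  linarith

lemma psi_compl (x : V) : psi G Sᶜ x = psi G S x := by
  rw [psi, psi, cutE_compl, compl_compl]
  ring

lemma max_proper_side (hconn : G.Connected) {x : V}
    (hmax : ∀ T, psi G T x ≤ psi G S x) : ∀ w ∈ S, ind G S w ≤ outd G S w := by
  intro w hw
  by_contra hlt
  push_neg at hlt
  have h1 := cutE_diff_singleton (G := G) hw
  have h2 : cutE G S + 1 ≤ cutE G (S \ {w}) := by omega
  exact absurd (hmax (S \ {w})) (not_le.mpr (psi_lt_psi_of_cut_lt hconn h2))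

end Sums

/-! ### Surgery on bad components when a bad vertex is flipped -/

section Surgery
variable [Fintype V]

lemma badComps_diff_eq (hprop : ∀ w ∈ S, ind G S w ≤ outd G S w)
    (hC₀ : C₀ ∈ badComps G S) (hv : v ∈ C₀) :
    badComps G (S \ {v}) = badComps G S \ {C₀} := by
  have hvS : v ∈ S := comps_subset hC₀.1 hv
  have hC₀cpt : C₀ = cpt G S v := eq_cpt_of_mem hC₀.1 hv
  ext C'
  constructor
  · rintro ⟨hc', hbad'⟩
    obtain ⟨x, hx, rfl⟩ := mem_comps_iff.mp hc'
    by_cases hvx : v ∈ cpt G S x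
    · exfalso
      obtain ⟨w, hadj, hw⟩ := exists_adj_cpt_diff hx.2 hvx
      have hwS : w ∈ S := (cpt_subset hw).1
      have hbadw := hbad' w hw
      rw [badVtx_iff] at hbadw
      have e1 := ind_diff_add_one (G := G) (w := w) hvS hadj.symm
      have e2 := outd_diff_add_one (G := G) (w := w) hvS hadj.symm
      have := hprop w hwS
      omega
    · have hxS : x ∈ S := hx.1
      have hcc : cpt G S x = cpt G (S \ {v}) x :=
        cpt_congr Set.diff_subset hx
          (fun y hy => ⟨cpt_subset hy, fun hyv => hvx (hyv ▸ hy)⟩)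
      have hnadj : ∀ w ∈ cpt G (S \ {v}) x, ¬ G.Adj w v := by
        intro w hw hadj
        exact hvx (adj_mem_cpt (hcc ▸ hw) hadj hvS)
      refine ⟨⟨?_, ?_⟩, ?_⟩
      · rw [mem_comps_iff]
        exact ⟨x, hxS, hcc.symm⟩
      · intro w hw
        exact (badVtx_diff_of_not_adj (hnadj w hw)).mp (hbad' w hw)
      · intro hCC
        rw [Set.mem_singleton_iff] at hCC
        have : v ∈ cpt G (S \ {v}) x := hCC ▸ hv
        exact (cpt_subset this).2 rfl
  · rintro ⟨⟨hcomps, hbad⟩, hne2⟩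
    rw [Set.mem_singleton_iff] at hne2
    have hvC : v ∉ C' := by
      intro hvC
      exact hne2 ((eq_cpt_of_mem hcomps hvC).trans hC₀cpt.symm)
    obtain ⟨x, hxS, rfl⟩ := mem_comps_iff.mp hcomps
    have hxv : x ∈ S \ {v} := ⟨hxS, fun h => hvC (h ▸ mem_cpt_self hxS)⟩
    have hcc : cpt G S x = cpt G (S \ {v}) x :=
      cpt_congr Set.diff_subset hxv
        (fun y hy => ⟨cpt_subset hy, fun hyv => hvC (hyv ▸ hy)⟩)
    refine ⟨?_, ?_⟩
    · rw [mem_comps_iff]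
      exact ⟨x, hxv, hcc⟩
    · intro w hw
      have hna : ¬ G.Adj w v := fun hadj => hvC (adj_mem_cpt hw hadj hvS)
      exact (badVtx_diff_of_not_adj hna).mpr (hbad w hw)

lemma badComps_compl_subset (hvS : v ∈ S) :
    badComps G (Sᶜ ∪ {v}) ⊆ badComps G Sᶜ ∪ {cpt G (Sᶜ ∪ {v}) v} := by
  rintro C' ⟨hc', hbad'⟩
  obtain ⟨x, hx, rfl⟩ := mem_comps_iff.mp hc'
  by_cases hvx : v ∈ cpt G (Sᶜ ∪ {v}) x
  · right
    rw [Set.mem_singleton_iff]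
    exact (cpt_eq_of_mem hvx).symm
  · left
    have hxv : x ≠ v := fun h => hvx (by subst h; exact mem_cpt_self hx)
    have hxSc : x ∈ Sᶜ := by
      rcases hx with h | h
      · exact h
      · exact absurd h hxv
    have hcc : cpt G (Sᶜ ∪ {v}) x = cpt G Sᶜ x :=
      cpt_congr Set.subset_union_left hxSc
        (fun y hy => by
          rcases cpt_subset hy with h | h
          · exact h
          · exact absurd (h ▸ hy) hvx)
    have hset : (Sᶜ ∪ {v}) \ {v} = Sᶜ := by
      ext z
      simp only [Set.mem_diff, Set.mem_union, Set.mem_singleton_iff, Set.mem_compl_iff]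
      constructor
      · rintro ⟨h1 | h1, h2⟩
        · exact h1
        · exact absurd h1 h2
      · intro h
        exact ⟨Or.inl h, fun hz => h (hz ▸ hvS)⟩
    refine ⟨?_, ?_⟩
    · rw [mem_comps_iff]
      exact ⟨x, hxSc, hcc⟩
    · intro w hw
      have hna : ¬ G.Adj w v := fun hadj => hvx (adj_mem_cpt hw hadj (Or.inr rfl))
      have h2 := (badVtx_diff_of_not_adj (S := Sᶜ ∪ {v}) hna).mpr (hbad' w hw)
      rwa [hset] at h2

end Surgery

/-! ### The key contradiction -/

lemma key_contr [Fintype V] (hconn : G.Connected) (x : V) (S : Set V)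
    (hmax : ∀ T, psi G T x ≤ psi G S x) (hC₀ : C₀ ∈ badComps G S) (hxC₀ : x ∉ C₀) :
    False := by
  classical
  have hprop := max_proper_side hconn hmax
  obtain ⟨v, hvC₀, hdv⟩ := exists_dSet (G := G) (x := x) (comps_nonempty hC₀.1)
  have hvS : v ∈ S := comps_subset hC₀.1 hvC₀
  have hd1 : 1 ≤ dSet G x C₀ := by
    rcases Nat.eq_zero_or_pos (dSet G x C₀) with h0 | h
    · exfalso
      rw [h0] at hdv
      exact hxC₀ ((hconn.dist_eq_zero_iff.mp hdv) ▸ hvC₀)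
    · exact h
  obtain ⟨u, hadj, hdu⟩ := exists_adj_dist_pred hconn (hdv ▸ hd1)
  have huS : u ∉ S := by
    intro huS
    have huC₀ : u ∈ C₀ := comps_adj_closed hC₀.1 hvC₀ hadj huS
    have := dSet_le (G := G) (x := x) huC₀
    omega
  have hcut : cutE G (S \ {v}) = cutE G S :=
    cutE_diff_singleton_of_bad hvS (hC₀.2 v hvC₀)
  have hcompl : (S \ {v})ᶜ = Sᶜ ∪ {v} := by
    ext z
    simp only [Set.mem_compl_iff, Set.mem_diff, Set.mem_singleton_iff, Set.mem_union,
      not_and, not_not]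
    constructor
    · intro h
      by_cases hz : z = v
      · exact Or.inr hz
      · exact Or.inl (fun hzS => hz (h hzS))
    · rintro (h | h) <;> intro hz
      · exact absurd hz h
      · exact h
  have hBS : badComps G (S \ {v}) = badComps G S \ {C₀} := badComps_diff_eq hprop hC₀ hvC₀
  -- the S-side sum decreases by exactly d
  have e1 : (∑ᶠ C ∈ badComps G (S \ {v}), (dSet G x C : ℤ))
      = (∑ᶠ C ∈ badComps G S, (dSet G x C : ℤ)) - (dSet G x C₀ : ℤ) := by
    rw [bsum_eq, bsum_eq]
    have hfs : (Set.toFinite (badComps G (S \ {v}))).toFinset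
        = (Set.toFinite (badComps G S)).toFinset.erase C₀ := by
      ext C
      simp only [Set.Finite.mem_toFinset, Finset.mem_erase, hBS, Set.mem_diff,
        Set.mem_singleton_iff]
      tauto
    rw [hfs, Finset.sum_erase_eq_sub (by rw [Set.Finite.mem_toFinset]; exact hC₀)]
  -- the complement-side sum increases by at most d - 1
  set D' := cpt G (Sᶜ ∪ {v}) v with hD'
  have hDu : u ∈ D' := adj_mem_cpt (mem_cpt_self (Or.inr rfl)) hadj (Or.inl huS)
  have hDd : (dSet G x D' : ℤ) ≤ (dSet G x C₀ : ℤ) - 1 := by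
    have := dSet_le (G := G) (x := x) hDu
    omega
  have hDnot : D' ∉ badComps G Sᶜ := by
    intro hD
    exact (comps_subset hD.1 (mem_cpt_self (Or.inr rfl) : v ∈ D')) hvS
  have e2 : (∑ᶠ C ∈ badComps G (S \ {v})ᶜ, (dSet G x C : ℤ))
      ≤ (∑ᶠ C ∈ badComps G Sᶜ, (dSet G x C : ℤ)) + ((dSet G x C₀ : ℤ) - 1) := by
    rw [hcompl, bsum_eq, bsum_eq]
    have hsub := badComps_compl_subset (G := G) hvS
    have hsplit : (Set.toFinite (badComps G (Sᶜ ∪ {v}))).toFinset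
        ⊆ insert D' ((Set.toFinite (badComps G Sᶜ)).toFinset) := by
      intro C hC
      rw [Set.Finite.mem_toFinset] at hC
      rcases hsub hC with h | h
      · exact Finset.mem_insert_of_mem ((Set.Finite.mem_toFinset _).mpr h)
      · rw [Set.mem_singleton_iff] at h
        exact h ▸ Finset.mem_insert_self _ _
    calc (∑ C ∈ (Set.toFinite (badComps G (Sᶜ ∪ {v}))).toFinset, (dSet G x C : ℤ))
        ≤ ∑ C ∈ insert D' ((Set.toFinite (badComps G Sᶜ)).toFinset), (dSet G x C : ℤ) :=
          Finset.sum_le_sum_of_subset_of_nonneg hsplit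
            (fun _ _ _ => Int.natCast_nonneg _)
      _ = (∑ C ∈ (Set.toFinite (badComps G Sᶜ)).toFinset, (dSet G x C : ℤ))
            + (dSet G x D' : ℤ) := by
          rw [Finset.sum_insert (by rw [Set.Finite.mem_toFinset]; exact hDnot)]
          ring
      _ ≤ _ := by linarith
  have hψ : psi G S x < psi G (S \ {v}) x := by
    rw [psi, psi, hcut]
    have := e1
    linarith
  exact absurd (hmax (S \ {v})) (not_le.mpr hψ)

end StmtAux


/-- Lemma: every finite connected graph admits a proper cut `(S, V\S)` such
that `G[S]` and `G[V\S]` together have at most one bad connected component. -/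
theorem stmt14 {V : Type*} [Fintype V] (G : SimpleGraph V) (hconn : G.Connected) :
    ∃ S : Set V, properCut G S ∧ (badComps G S ∪ badComps G Sᶜ).ncard ≤ 1 := by
  classical
  open StmtAux in
  have hneV : Nonempty V := hconn.nonempty
  have x : V := Classical.arbitrary V
  obtain ⟨S, hS⟩ := Finite.exists_max (fun T : Set V => psi G T x)
  have hmax : ∀ T, psi G T x ≤ psi G S x := hS
  have hmaxc : ∀ T, psi G T x ≤ psi G Sᶜ x := fun T =>
    le_of_le_of_eq (hS T) (StmtAux.psi_compl x).symm
  have hp1 := StmtAux.max_proper_side hconn hmax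
  have hp2 := StmtAux.max_proper_side hconn hmaxc
  have hproper : properCut G S := by
    rw [StmtAux.properCut_iff]
    refine ⟨hp1, fun w hw => ?_⟩
    have h2 := hp2 w hw
    rwa [← StmtAux.ind_eq_outd_compl, ← StmtAux.outd_eq_ind_compl] at h2
  refine ⟨S, hproper, ?_⟩
  by_contra hcard
  push_neg at hcard
  obtain ⟨C₁, C₂, hC₁, hC₂, hne⟩ :=
    (Set.one_lt_ncard_iff (Set.toFinite _)).mp hcard
  have hdisj := StmtAux.union_badComps_disjoint hC₁ hC₂ hne
  obtain ⟨C₀, hC₀U, hxC₀⟩ : ∃ C₀ ∈ badComps G S ∪ badComps G Sᶜ, x ∉ C₀ := by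
    by_cases hx1 : x ∈ C₁
    · exact ⟨C₂, hC₂, fun hx2 => (Set.disjoint_left.mp hdisj hx1) hx2⟩
    · exact ⟨C₁, hC₁, hx1⟩
  rcases hC₀U with hC₀ | hC₀
  · exact StmtAux.key_contr hconn x S hmax hC₀ hxC₀
  · exact StmtAux.key_contr hconn x Sᶜ hmaxc hC₀ hxC₀
end

section
/- Let G(V,E) be a finite simple undirected graph and let 𝒢(𝒱,ℰ) be the graph constructed from G as described. If D ⊆ V is a dominating set of G, then c(D ∪ {z_1, z_2}, 𝒢, φ^strict) = 𝒱; that is, D ∪ {z_1, z_2} is an irreversible dynamo of 𝒢 under the strict-majority scenario. -/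
/-- The degree `deg_G(v)` of `v` in `G`, as the cardinality of its
neighborhood. -/
noncomputable def deg {V : Type*} (G : SimpleGraph V) (v : V) : ℕ :=
  (G.neighborSet v).ncard

/-- `u ∈ N*_G(v) = N_G(v) ∪ {v}`. -/
def closedNbr {V : Type*} (G : SimpleGraph V) (v u : V) : Prop :=
  G.Adj v u ∨ u = v

/-- The vertex set `𝒱 = V ∪ 𝒲 ∪ 𝒳 ∪ 𝒴 ∪ {z₁,z₂} ∪ {g₁,g₂}` of the graph
`𝒢` constructed from `G`: for each `v ∈ V` there are fresh vertices `w v`,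
`x v i` for `i < deg_G(v)` (the set `𝒳_v`) and `y v i` for `i < deg_G(v)`
(the set `𝒴_v`), plus four further fresh vertices `z₁, z₂, g₁, g₂`. -/
inductive CalV {V : Type*} (G : SimpleGraph V) where
  | orig (v : V)
  | w (v : V)
  | x (v : V) (i : Fin (deg G v))
  | y (v : V) (i : Fin (deg G v))
  | z1
  | z2
  | g1
  | g2

/-- The edges `ℰ` of `𝒢`, as a base relation: `(v, x)` for `x ∈ 𝒳_v`;
`(w_v, u)` for `u ∈ N*_G(v)`; `(w_v, y)` for `y ∈ 𝒴_v`; `(y, z₁)` and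
`(y, z₂)` for `y ∈ 𝒴`; `(z₁, g₁)`; `(z₂, g₂)`. -/
inductive CalRel {V : Type*} (G : SimpleGraph V) : CalV G → CalV G → Prop where
  | vx (v : V) (i : Fin (deg G v)) : CalRel G (.orig v) (.x v i)
  | wu (v u : V) (h : closedNbr G v u) : CalRel G (.w v) (.orig u)
  | wy (v : V) (i : Fin (deg G v)) : CalRel G (.w v) (.y v i)
  | yz1 (v : V) (i : Fin (deg G v)) : CalRel G (.y v i) .z1
  | yz2 (v : V) (i : Fin (deg G v)) : CalRel G (.y v i) .z2
  | zg1 : CalRel G .z1 .g1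
  | zg2 : CalRel G .z2 .g2

/-- The graph `𝒢(𝒱, ℰ)` constructed from `G`. -/
noncomputable def CalG {V : Type*} (G : SimpleGraph V) : SimpleGraph (CalV G) :=
  SimpleGraph.fromRel (CalRel G)

/-- `strictClosure H S` is `c(S, H, φ^strict)`: the least superset of `S`
closed under the strict-majority coloring rule, by which a vertex is colored
white whenever more than half of its neighbors are white. -/
def strictClosure {W : Type*} (H : SimpleGraph W) (S : Set W) : Set W :=
  ⋂₀ {T : Set W | S ⊆ T ∧
    ∀ v, (H.neighborSet v).ncard < 2 * (H.neighborSet v ∩ T).ncard → v ∈ T}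

section Aux

variable {V : Type*} [Fintype V] {G : SimpleGraph V}

lemma calG_adj {a b : CalV G} :
    (CalG G).Adj a b ↔ a ≠ b ∧ (CalRel G a b ∨ CalRel G b a) := by
  simp [CalG, SimpleGraph.fromRel_adj]

lemma orig_inj : Function.Injective (fun v : V => (CalV.orig v : CalV G)) := by
  intro a b h; injection h

lemma w_inj : Function.Injective (fun v : V => (CalV.w v : CalV G)) := by
  intro a b h; injection h

lemma y_inj (v : V) :
    Function.Injective (fun i : Fin (deg G v) => (CalV.y v i : CalV G)) := by
  intro a b h; injection h

lemma x_inj (v : V) :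
    Function.Injective (fun i : Fin (deg G v) => (CalV.x v i : CalV G)) := by
  intro a b h; injection h

lemma nbhd_g1 : (CalG G).neighborSet CalV.g1 = {CalV.z1} := by
  ext c
  simp only [SimpleGraph.mem_neighborSet, calG_adj, Set.mem_singleton_iff]
  constructor
  · rintro ⟨hne, h | h⟩ <;> cases h <;> rfl
  · rintro rfl; exact ⟨by simp, Or.inr CalRel.zg1⟩

lemma nbhd_g2 : (CalG G).neighborSet CalV.g2 = {CalV.z2} := by
  ext c
  simp only [SimpleGraph.mem_neighborSet, calG_adj, Set.mem_singleton_iff]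
  constructor
  · rintro ⟨hne, h | h⟩ <;> cases h <;> rfl
  · rintro rfl; exact ⟨by simp, Or.inr CalRel.zg2⟩

lemma nbhd_y (v : V) (i : Fin (deg G v)) :
    (CalG G).neighborSet (CalV.y v i) = {CalV.w v, CalV.z1, CalV.z2} := by
  ext c
  simp only [SimpleGraph.mem_neighborSet, calG_adj, Set.mem_insert_iff,
    Set.mem_singleton_iff]
  constructor
  · rintro ⟨hne, h | h⟩ <;> cases h <;> simp
  · rintro (rfl | rfl | rfl)
    · exact ⟨by simp, Or.inr (CalRel.wy v i)⟩
    · exact ⟨by simp, Or.inl (CalRel.yz1 v i)⟩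
    · exact ⟨by simp, Or.inl (CalRel.yz2 v i)⟩

lemma nbhd_w (v : V) :
    (CalG G).neighborSet (CalV.w v) =
      (fun u => (CalV.orig u : CalV G)) '' {u | closedNbr G v u} ∪
        (fun i => CalV.y v i) '' Set.univ := by
  ext c
  simp only [SimpleGraph.mem_neighborSet, calG_adj, Set.mem_union, Set.mem_image,
    Set.mem_setOf_eq, Set.mem_univ, true_and]
  constructor
  · rintro ⟨hne, h | h⟩
    · cases h with
      | wu v u hu => exact Or.inl ⟨u, hu, rfl⟩
      | wy v i => exact Or.inr ⟨i, rfl⟩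
    · cases h
  · rintro (⟨u, hu, rfl⟩ | ⟨i, rfl⟩)
    · exact ⟨by simp, Or.inl (CalRel.wu v u hu)⟩
    · exact ⟨by simp, Or.inl (CalRel.wy v i)⟩

lemma nbhd_orig (v : V) :
    (CalG G).neighborSet (CalV.orig v) =
      (fun i => (CalV.x v i : CalV G)) '' Set.univ ∪
        (fun u => (CalV.w u : CalV G)) '' {u | closedNbr G u v} := by
  ext c
  simp only [SimpleGraph.mem_neighborSet, calG_adj, Set.mem_union, Set.mem_image,
    Set.mem_setOf_eq, Set.mem_univ, true_and]
  constructor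
  · rintro ⟨hne, h | h⟩
    · cases h with
      | vx v i => exact Or.inl ⟨i, rfl⟩
    · cases h with
      | wu u v hu => exact Or.inr ⟨u, hu, rfl⟩
  · rintro (⟨i, rfl⟩ | ⟨u, hu, rfl⟩)
    · exact ⟨by simp, Or.inl (CalRel.vx v i)⟩
    · exact ⟨by simp, Or.inr (CalRel.wu u v hu)⟩

lemma nbhd_x (v : V) (i : Fin (deg G v)) :
    (CalG G).neighborSet (CalV.x v i) = {CalV.orig v} := by
  ext c
  simp only [SimpleGraph.mem_neighborSet, calG_adj, Set.mem_singleton_iff]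
  constructor
  · rintro ⟨hne, h | h⟩ <;> cases h <;> rfl
  · rintro rfl; exact ⟨by simp, Or.inr (CalRel.vx v i)⟩

lemma closedNbr_set_eq (v : V) :
    {u | closedNbr G v u} = insert v (G.neighborSet v) := by
  ext u
  simp only [Set.mem_setOf_eq, closedNbr, Set.mem_insert_iff,
    SimpleGraph.mem_neighborSet]
  tauto

lemma closedNbr_set_eq' (v : V) :
    {u | closedNbr G u v} = insert v (G.neighborSet v) := by
  ext u
  simp only [Set.mem_setOf_eq, closedNbr, Set.mem_insert_iff,
    SimpleGraph.mem_neighborSet, SimpleGraph.adj_comm]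
  tauto

lemma ncard_closedNbr_set (v : V) : {u | closedNbr G v u}.ncard = deg G v + 1 := by
  rw [closedNbr_set_eq, Set.ncard_insert_of_notMem (by simp)]
  rfl

lemma ncard_closedNbr_set' (v : V) : {u | closedNbr G u v}.ncard = deg G v + 1 := by
  rw [closedNbr_set_eq', Set.ncard_insert_of_notMem (by simp)]
  rfl

lemma ncard_y_univ (v : V) :
    ((fun i => (CalV.y v i : CalV G)) '' Set.univ).ncard = deg G v := by
  rw [Set.ncard_image_of_injective _ (y_inj v)]
  simp [Set.ncard_univ]

lemma ncard_x_univ (v : V) :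
    ((fun i => (CalV.x v i : CalV G)) '' Set.univ).ncard = deg G v := by
  rw [Set.ncard_image_of_injective _ (x_inj v)]
  simp [Set.ncard_univ]

lemma step {T : Set (CalV G)}
    (hcl : ∀ c, ((CalG G).neighborSet c).ncard <
      2 * ((CalG G).neighborSet c ∩ T).ncard → c ∈ T)
    {c : CalV G} {N A : Set (CalV G)} (hN : (CalG G).neighborSet c = N)
    (hfin : N.Finite) (hA : A ⊆ N ∩ T) (hcard : N.ncard < 2 * A.ncard) :
    c ∈ T := by
  apply hcl
  rw [hN]
  refine lt_of_lt_of_le hcard ?_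
  have hfin' : (N ∩ T).Finite := hfin.subset Set.inter_subset_left
  exact Nat.mul_le_mul_left 2 (Set.ncard_le_ncard hA hfin')

end Aux

/-- Lemma: if `D` is a dominating set of `G`, then `D ∪ {z₁, z₂}` is an
irreversible dynamo of `𝒢` under the strict-majority scenario. -/
theorem stmt16 {V : Type*} [Fintype V] (G : SimpleGraph V) (D : Set V)
    (hD : ∀ v : V, ∃ u ∈ D, closedNbr G v u) :
    strictClosure (CalG G)
        ((fun v => CalV.orig v) '' D ∪ {CalV.z1, CalV.z2}) = Set.univ := by
  apply Set.eq_univ_of_forall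
  intro c
  simp only [strictClosure, Set.mem_sInter, Set.mem_setOf_eq]
  rintro T ⟨hS, hcl⟩
  have hz1 : CalV.z1 ∈ T := hS (Set.mem_union_right _ (by simp))
  have hz2 : CalV.z2 ∈ T := hS (Set.mem_union_right _ (by simp))
  have hy : ∀ (v : V) (i : Fin (deg G v)), CalV.y v i ∈ T := by
    intro v i
    refine step hcl (nbhd_y v i) ?_ (A := {CalV.z1, CalV.z2}) ?_ ?_
    · exact (Set.finite_singleton _).insert _ |>.insert _
    · rintro a (rfl | rfl)
      · exact ⟨by simp, hz1⟩
      · exact ⟨by simp, hz2⟩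
    · rw [Set.ncard_insert_of_notMem (by simp)
          ((Set.finite_singleton _).insert _),
        Set.ncard_pair (by simp)]
      omega
  have hg1 : CalV.g1 ∈ T :=
    step hcl nbhd_g1 (Set.finite_singleton _)
      (A := {CalV.z1}) (by rintro a rfl; exact ⟨rfl, hz1⟩)
      (by simp)
  have hg2 : CalV.g2 ∈ T :=
    step hcl nbhd_g2 (Set.finite_singleton _)
      (A := {CalV.z2}) (by rintro a rfl; exact ⟨rfl, hz2⟩)
      (by simp)
  have hw : ∀ v : V, CalV.w v ∈ T := by
    intro v
    obtain ⟨u, huD, hun⟩ := hD v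
    have hfin1 : ((fun u => (CalV.orig u : CalV G)) '' {u | closedNbr G v u}).Finite :=
      (Set.toFinite _).image _
    have hfin2 : ((fun i => (CalV.y v i : CalV G)) '' Set.univ).Finite :=
      (Set.toFinite _).image _
    refine step hcl (nbhd_w v) (hfin1.union hfin2)
      (A := insert (CalV.orig u) ((fun i => CalV.y v i) '' Set.univ)) ?_ ?_
    · rintro a (rfl | ⟨i, -, rfl⟩)
      · exact ⟨Or.inl ⟨u, hun, rfl⟩, hS (Set.mem_union_left _ ⟨u, huD, rfl⟩)⟩
      · exact ⟨Or.inr ⟨i, trivial, rfl⟩, hy v i⟩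
    · have hdisj : Disjoint ((fun u => (CalV.orig u : CalV G)) '' {u | closedNbr G v u})
          ((fun i => (CalV.y v i : CalV G)) '' Set.univ) := by
        rw [Set.disjoint_left]
        rintro a ⟨u', -, rfl⟩ ⟨i, -, h⟩
        simp at h
      rw [Set.ncard_union_eq hdisj hfin1 hfin2,
        Set.ncard_image_of_injective _ orig_inj, ncard_closedNbr_set,
        ncard_y_univ,
        Set.ncard_insert_of_notMem (by rintro ⟨i, -, h⟩; simp at h)
          ((Set.toFinite _).image _), ncard_y_univ]
      omega
  have horig : ∀ v : V, CalV.orig v ∈ T := by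
    intro v
    have hfin1 : ((fun i => (CalV.x v i : CalV G)) '' Set.univ).Finite :=
      (Set.toFinite _).image _
    have hfin2 : ((fun u => (CalV.w u : CalV G)) '' {u | closedNbr G u v}).Finite :=
      (Set.toFinite _).image _
    refine step hcl (nbhd_orig v) (hfin1.union hfin2)
      (A := (fun u => (CalV.w u : CalV G)) '' {u | closedNbr G u v}) ?_ ?_
    · rintro a ⟨u', hu', rfl⟩
      exact ⟨Or.inr ⟨u', hu', rfl⟩, hw u'⟩
    · have hdisj : Disjoint ((fun i => (CalV.x v i : CalV G)) '' Set.univ)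
          ((fun u => (CalV.w u : CalV G)) '' {u | closedNbr G u v}) := by
        rw [Set.disjoint_left]
        rintro a ⟨i, -, rfl⟩ ⟨u', -, h⟩
        simp at h
      rw [Set.ncard_union_eq hdisj hfin1 hfin2, ncard_x_univ,
        Set.ncard_image_of_injective _ w_inj, ncard_closedNbr_set']
      omega
  have hx : ∀ (v : V) (i : Fin (deg G v)), CalV.x v i ∈ T := by
    intro v i
    exact step hcl (nbhd_x v i) (Set.finite_singleton _)
      (A := {CalV.orig v}) (by rintro a rfl; exact ⟨rfl, horig v⟩)
      (by simp)
  cases c with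
  | orig v => exact horig v
  | w v => exact hw v
  | x v i => exact hx v i
  | y v i => exact hy v i
  | z1 => exact hz1
  | z2 => exact hz2
  | g1 => exact hg1
  | g2 => exact hg2
end
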